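/- arXiv:2110.12739 — 3 statements merged into one kernel-verified Lean document; each statement's English description precedes it below -/
import Mathlib

section
/- Let Z be a centered process on [0,1] whose law belongs to R_α(L) for some α ∈ (0,1] and L > 0, with covariance operator Γ and covariance kernel K. For the histogram system of dimension D, ‖Π_D Γ Π_D − Γ‖_∞² ≤ (16 L ‖K‖_∞/(α+1)²) D^{−2α}, where ‖·‖_∞ denotes the operator norm on L²([0,1]). -/
open MeasureTheory ProbabilityTheory

noncomputable section

/-- The unit interval `[0,1]` as a subset of `ℝ`. -/
def unitI : Set ℝ := Set.Icc 0 1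

/-- Covariance kernel of the canonical process `ω ↦ ω t` under a law `P` on `ℝ → ℝ`. -/
def covK (P : Measure (ℝ → ℝ)) (s t : ℝ) : ℝ := ∫ ω, ω s * ω t ∂P

/-- Sup norm `‖K‖_∞` of a kernel over `[0,1]²`. -/
def KsupK (K : ℝ → ℝ → ℝ) : ℝ :=
  sSup {x | ∃ s ∈ unitI, ∃ t ∈ unitI, x = |K s t|}

/-- The law `P` of a centered process with finite second moments belongs to `R_α(L)`. -/
def memReg (α L : ℝ) (P : Measure (ℝ → ℝ)) : Prop :=
  IsProbabilityMeasure P ∧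
  (∀ t ∈ unitI, Integrable (fun ω => (ω t) ^ 2) P) ∧
  (∀ t ∈ unitI, (∫ ω, ω t ∂P) = 0) ∧
  ∀ s ∈ unitI, ∀ t ∈ unitI, (∫ ω, (ω t - ω s) ^ 2 ∂P) ≤ L * |t - s| ^ (2 * α)

/-- `P` is the law of a (centered) Gaussian process on `[0,1]`. -/
def isGaussP (P : Measure (ℝ → ℝ)) : Prop :=
  ∀ (m : ℕ) (c ts : Fin m → ℝ), (∀ i, ts i ∈ unitI) →
    Measure.map (fun ω => ∑ i, c i * ω (ts i)) P
      = gaussianReal 0 (Real.toNNReal (∫ ω, (∑ i, c i * ω (ts i)) ^ 2 ∂P))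

/-- The regular grid point `t_h = h/(p-1)`. -/
def grid (p : ℕ) (h : Fin p) : ℝ := ((h : ℕ) : ℝ) / ((p : ℝ) - 1)

/-- Sample space for `n` i.i.d. curves and the i.i.d. Gaussian noise array. -/
abbrev ObsSpace (n p : ℕ) : Type := (Fin n → (ℝ → ℝ)) × (Fin n → Fin p → ℝ)

/-- Joint law of `n` i.i.d. copies of the process of law `P` together with
i.i.d. `N(0,σ²)` noise variables. -/
def obsMeasure (P : Measure (ℝ → ℝ)) (σ : ℝ) (n p : ℕ) : Measure (ObsSpace n p) :=
  (Measure.pi fun _ => P).prod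
    (Measure.pi fun _ => Measure.pi fun _ => gaussianReal 0 (Real.toNNReal (σ ^ 2)))

/-- The observations `Y_i(t_h) = Z_i(t_h) + ε_{i,h}`. -/
def Yobs {n p : ℕ} (ω : ObsSpace n p) : Fin n → Fin p → ℝ :=
  fun i h => ω.1 i (grid p h) + ω.2 i h

/-- Integral operator on `L²([0,1])` with kernel `R`. -/
def intOp (R : ℝ → ℝ → ℝ) (f : ℝ → ℝ) (t : ℝ) : ℝ := ∫ s in unitI, R s t * f s

/-- Orthogonal projection `Π_D` onto `span(φ_λ, λ ∈ Λ_D)`. -/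
def projD {D : ℕ} (φ : Fin D → ℝ → ℝ) (f : ℝ → ℝ) (t : ℝ) : ℝ :=
  ∑ l, (∫ s in unitI, φ l s * f s) * φ l t

/-- Operator norm on `L²([0,1])` of a map on functions. -/
def opNorm (T : (ℝ → ℝ) → ℝ → ℝ) : ℝ :=
  sSup {x | ∃ f : ℝ → ℝ, Measurable f ∧ (∫ t in unitI, (f t) ^ 2) ≤ 1 ∧
    x = Real.sqrt (∫ t in unitI, (T f t) ^ 2)}

/-- `(φ_λ)` is an orthonormal system of `L²([0,1])`. -/
def ONS {D : ℕ} (φ : Fin D → ℝ → ℝ) : Prop :=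
  (∀ l, Measurable (φ l)) ∧
  ∀ l l', (∫ t in unitI, φ l t * φ l' t) = if l = l' then (1 : ℝ) else 0

/-- Empirical coefficients `ỹ_{i,λ} = p⁻¹ ∑_h Y_i(t_h) φ_λ(t_h)`. -/
def ytil {n p D : ℕ} (φ : Fin D → ℝ → ℝ) (ω : ObsSpace n p) (i : Fin n) (l : Fin D) : ℝ :=
  ((p : ℝ))⁻¹ * ∑ h, Yobs ω i h * φ l (grid p h)

/-- Reconstructed curve `Ỹ_i = ∑_λ ỹ_{i,λ} φ_λ`. -/
def Ytil {n p D : ℕ} (φ : Fin D → ℝ → ℝ) (ω : ObsSpace n p) (i : Fin n) (t : ℝ) : ℝ :=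
  ∑ l, ytil φ ω i l * φ l t

/-- Empirical covariance kernel `K̂_φ(s,t) = n⁻¹ ∑ᵢ Ỹ_i(s) Ỹ_i(t)`. -/
def Khat {n p D : ℕ} (φ : Fin D → ℝ → ℝ) (ω : ObsSpace n p) (s t : ℝ) : ℝ :=
  ((n : ℝ))⁻¹ * ∑ i, Ytil φ ω i s * Ytil φ ω i t

/-- Empirical coefficient matrix `Ĝ_φ = (n⁻¹ ∑ᵢ ỹ_{i,λ} ỹ_{i,λ'})_{λ,λ'}`. -/
def Ghat {n p D : ℕ} (φ : Fin D → ℝ → ℝ) (ω : ObsSpace n p) (l l' : Fin D) : ℝ :=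
  ((n : ℝ))⁻¹ * ∑ i, ytil φ ω i l * ytil φ ω i l'

/-- `σ_λ² = (σ²/p²) ∑_h φ_λ(t_h)²`. -/
def sig2 {D : ℕ} (σ : ℝ) (p : ℕ) (φ : Fin D → ℝ → ℝ) (l : Fin D) : ℝ :=
  σ ^ 2 / (p : ℝ) ^ 2 * ∑ h : Fin p, (φ l (grid p h)) ^ 2

/-- `s_λ² = p⁻² ∑_{h,h'} K(t_h,t_{h'}) φ_λ(t_h) φ_λ(t_{h'})`. -/
def ss2 {D : ℕ} (K : ℝ → ℝ → ℝ) (p : ℕ) (φ : Fin D → ℝ → ℝ) (l : Fin D) : ℝ :=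
  ((p : ℝ) ^ 2)⁻¹ * ∑ h : Fin p, ∑ h' : Fin p,
    K (grid p h) (grid p h') * φ l (grid p h) * φ l (grid p h')

/-- Discretization term `A_p^{(K)}(φ, D)`. -/
def ApK {D : ℕ} (K : ℝ → ℝ → ℝ) (p : ℕ) (φ : Fin D → ℝ → ℝ) : ℝ :=
  ∑ l, ∑ l', (((p : ℝ) ^ 2)⁻¹ * (∑ h : Fin p, ∑ h' : Fin p,
      K (grid p h) (grid p h') * φ l (grid p h) * φ l' (grid p h'))
    - ∫ s in unitI, ∫ t in unitI, K s t * φ l s * φ l' t) ^ 2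

/-- Discretization term `A_p^{(σ)}(φ, D)`. -/
def Apsig {D : ℕ} (σ : ℝ) (p : ℕ) (φ : Fin D → ℝ → ℝ) : ℝ :=
  σ ^ 4 / (p : ℝ) ^ 2 * ∑ l, ∑ l',
    (((p : ℝ))⁻¹ * (∑ h : Fin p, φ l (grid p h) * φ l' (grid p h))
      - if l = l' then (1 : ℝ) else 0) ^ 2

/-- Assumption (A4): fourth-moment bound on the grid vector of the process. -/
def A4 (P : Measure (ℝ → ℝ)) (p : ℕ) (C1 : ℝ) : Prop :=
  ∀ v : Fin p → ℝ,
    (∫ ω, (∑ h, v h * ω (grid p h)) ^ 4 ∂P)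
      ≤ C1 * (∫ ω, (∑ h, v h * ω (grid p h)) ^ 2 ∂P) ^ 2

/-- Sub-Gaussian norm `‖W‖_{ψ₂} = sup_{q ≥ 1} q^{-1/2} (E|W|^q)^{1/q}`. -/
def sgNorm {X : Type*} [MeasurableSpace X] (P : Measure X) (W : X → ℝ) : ℝ :=
  sSup {x | ∃ q : ℝ, 1 ≤ q ∧ x = q ^ (-(2 : ℝ)⁻¹) * (∫ ω, |W ω| ^ q ∂P) ^ q⁻¹}

/-- Assumption (Aq): sub-Gaussian control of the grid vector of the process. -/
def Aq (P : Measure (ℝ → ℝ)) (p : ℕ) (C2 : ℝ) : Prop :=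
  ∀ v : Fin p → ℝ,
    (sgNorm P (fun ω => ∑ h, v h * ω (grid p h))) ^ 2
      ≤ C2 * ∫ ω, (∑ h, v h * ω (grid p h)) ^ 2 ∂P

/-- The spectral gap quantity `b_d` (here `d` is a 0-based index: `bGap μ d` is `b_{d+1}`
of the paper). -/
def bGap (μ : ℕ → ℝ) (d : ℕ) : ℝ :=
  if d = 0 then 8 / (μ 0 - μ 1) ^ 2
  else 8 / min (μ d - μ (d + 1)) (μ (d - 1) - μ d) ^ 2

/-- `(μ, η)` is a spectral decomposition of the integral operator with kernel `R`:
orthonormal eigenfunctions and `R(s,t) = ∑ μ_d η_d(s) η_d(t)`. -/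
def specDecomp (R : ℝ → ℝ → ℝ) (μ : ℕ → ℝ) (η : ℕ → ℝ → ℝ) : Prop :=
  (∀ d, Measurable (η d)) ∧
  (∀ d d', (∫ t in unitI, η d t * η d' t) = if d = d' then (1 : ℝ) else 0) ∧
  (∀ d, ∀ t ∈ unitI, (∫ s in unitI, R s t * η d s) = μ d * η d t) ∧
  (∀ s ∈ unitI, ∀ t ∈ unitI, R s t = ∑' d, μ d * η d s * η d t)

/-- The histogram system `φ_λ = √D · 1_{(λ/D, (λ+1)/D]}`. -/
def histφ (D : ℕ) (l : Fin D) : ℝ → ℝ :=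
  Set.indicator (Set.Ioc (((l : ℕ) : ℝ) / D) ((((l : ℕ) : ℝ) + 1) / D))
    (fun _ => Real.sqrt D)



lemma aux_integrable_mul {X : Type*} [MeasurableSpace X] {μ : Measure X} {f g : X → ℝ}
    (hfm : AEStronglyMeasurable f μ) (hgm : AEStronglyMeasurable g μ)
    (hf : Integrable (fun x => f x ^ 2) μ) (hg : Integrable (fun x => g x ^ 2) μ) :
    Integrable (fun x => f x * g x) μ := by
  refine Integrable.mono' ((hf.add hg).const_mul (2⁻¹ : ℝ)) (hfm.mul hgm) ?_
  filter_upwards with x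
  have h := sq_nonneg (|f x| - |g x|)
  rw [Real.norm_eq_abs, abs_mul]
  simp only [Pi.add_apply]
  nlinarith [abs_nonneg (f x), abs_nonneg (g x), sq_abs (f x), sq_abs (g x)]

lemma aux_cs {X : Type*} [MeasurableSpace X] {μ : Measure X} {f g : X → ℝ}
    (hf : MemLp f 2 μ) (hg : MemLp g 2 μ) :
    (∫ x, f x * g x ∂μ) ^ 2 ≤ (∫ x, f x ^ 2 ∂μ) * (∫ x, g x ^ 2 ∂μ) := by
  have hpq : Real.HolderConjugate 2 2 := Real.HolderConjugate.two_two
  have hf2 : MemLp f (ENNReal.ofReal 2) μ := by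
    convert hf using 2; simp [ENNReal.ofReal_ofNat]
  have hg2 : MemLp g (ENNReal.ofReal 2) μ := by
    convert hg using 2; simp [ENNReal.ofReal_ofNat]
  have h := integral_mul_norm_le_Lp_mul_Lq hpq hf2 hg2
  have hfn : (∫ x, ‖f x‖ ^ (2:ℝ) ∂μ) = ∫ x, f x ^ 2 ∂μ := by
    congr 1; funext x
    rw [show ((2:ℝ)) = ((2:ℕ):ℝ) by norm_num, Real.rpow_natCast]
    simp [sq_abs]
  have hgn : (∫ x, ‖g x‖ ^ (2:ℝ) ∂μ) = ∫ x, g x ^ 2 ∂μ := by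
    congr 1; funext x
    rw [show ((2:ℝ)) = ((2:ℕ):ℝ) by norm_num, Real.rpow_natCast]
    simp [sq_abs]
  rw [hfn, hgn] at h
  have hA : 0 ≤ ∫ x, f x ^ 2 ∂μ := integral_nonneg fun x => sq_nonneg _
  have hB : 0 ≤ ∫ x, g x ^ 2 ∂μ := integral_nonneg fun x => sq_nonneg _
  have habs : |∫ x, f x * g x ∂μ| ≤ (∫ x, f x ^ 2 ∂μ) ^ ((1:ℝ)/2) * (∫ x, g x ^ 2 ∂μ) ^ ((1:ℝ)/2) := by
    calc |∫ x, f x * g x ∂μ| ≤ ∫ x, ‖f x‖ * ‖g x‖ ∂μ := by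
          simpa [Real.norm_eq_abs, abs_mul] using
            norm_integral_le_integral_norm (μ := μ) (fun x => f x * g x)
      _ ≤ _ := h
  have hsq := mul_self_le_mul_self (abs_nonneg _) habs
  calc (∫ x, f x * g x ∂μ) ^ 2 = |∫ x, f x * g x ∂μ| * |∫ x, f x * g x ∂μ| := by
        rw [← abs_mul, ← sq, abs_of_nonneg (sq_nonneg _)]
    _ ≤ ((∫ x, f x ^ 2 ∂μ) ^ ((1:ℝ)/2) * (∫ x, g x ^ 2 ∂μ) ^ ((1:ℝ)/2)) *
        ((∫ x, f x ^ 2 ∂μ) ^ ((1:ℝ)/2) * (∫ x, g x ^ 2 ∂μ) ^ ((1:ℝ)/2)) := hsq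
    _ = ((∫ x, f x ^ 2 ∂μ) ^ ((1:ℝ)/2) * (∫ x, f x ^ 2 ∂μ) ^ ((1:ℝ)/2)) *
        ((∫ x, g x ^ 2 ∂μ) ^ ((1:ℝ)/2) * (∫ x, g x ^ 2 ∂μ) ^ ((1:ℝ)/2)) := by ring
    _ = (∫ x, f x ^ 2 ∂μ) * (∫ x, g x ^ 2 ∂μ) := by
        rw [← Real.rpow_add' hA (by norm_num), ← Real.rpow_add' hB (by norm_num)]
        norm_num

lemma holder_continuousOn {F : ℝ → ℝ} {C a : ℝ} (ha : 0 < a)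
    (h : ∀ x ∈ unitI, ∀ y ∈ unitI, |F x - F y| ≤ C * |x - y| ^ a) :
    ContinuousOn F unitI := by
  intro x hx
  have htend : Filter.Tendsto (fun y : ℝ => C * |y - x| ^ a) (nhdsWithin x unitI) (nhds 0) := by
    have h1 : Filter.Tendsto (fun y : ℝ => |y - x|) (nhdsWithin x unitI) (nhds 0) := by
      have : Continuous fun y : ℝ => |y - x| := (continuous_id.sub continuous_const).abs
      have := this.continuousAt (x := x)
      simpa using (this.tendsto.mono_left nhdsWithin_le_nhds)
    have h2 : ContinuousAt (fun z : ℝ => z ^ a) 0 := Real.continuousAt_rpow_const 0 a (Or.inr ha.le)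
    have h3 := (h2.tendsto.comp h1)
    rw [Real.zero_rpow ha.ne'] at h3
    simpa using h3.const_mul C
  rw [ContinuousWithinAt, tendsto_iff_dist_tendsto_zero]
  refine squeeze_zero' (Filter.Eventually.of_forall fun y => dist_nonneg) ?_ htend
  filter_upwards [self_mem_nhdsWithin] with y hy
  rw [Real.dist_eq]
  exact h y hy x hx

section CovFacts

variable {P : Measure (ℝ → ℝ)} {α L : ℝ}

lemma unitI_meas : MeasurableSet unitI := measurableSet_Icc

lemma zero_mem_unitI : (0:ℝ) ∈ unitI := by simp [unitI]

lemma memL2_eval (hreg : memReg α L P) {t : ℝ} (ht : t ∈ unitI) :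
    MemLp (fun ω : ℝ → ℝ => ω t) 2 P :=
  (memLp_two_iff_integrable_sq (measurable_pi_apply t).aestronglyMeasurable).2 (hreg.2.1 t ht)

lemma covK_int (hreg : memReg α L P) {s t : ℝ} (hs : s ∈ unitI) (ht : t ∈ unitI) :
    Integrable (fun ω : ℝ → ℝ => ω s * ω t) P :=
  aux_integrable_mul (measurable_pi_apply s).aestronglyMeasurable
    (measurable_pi_apply t).aestronglyMeasurable (hreg.2.1 s hs) (hreg.2.1 t ht)

lemma covK_symm (P : Measure (ℝ → ℝ)) (s t : ℝ) : covK P s t = covK P t s := by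
  simp only [covK, mul_comm]

lemma covK_diag_eq (P : Measure (ℝ → ℝ)) (t : ℝ) : covK P t t = ∫ ω, (ω t) ^ 2 ∂P := by
  simp only [covK, sq]

lemma covK_diag_nonneg (P : Measure (ℝ → ℝ)) (t : ℝ) : 0 ≤ covK P t t :=
  integral_nonneg fun ω => mul_self_nonneg _

lemma covK_diag_le (hreg : memReg α L P) (hα : α ∈ Set.Ioc (0:ℝ) 1) (hL : 0 < L)
    {t : ℝ} (ht : t ∈ unitI) :
    covK P t t ≤ 2 * covK P 0 0 + 2 * L := by
  have h0 := zero_mem_unitI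
  have hint0 : Integrable (fun ω : ℝ → ℝ => ω 0 * ω 0) P := covK_int hreg h0 h0
  have hintd : Integrable (fun ω : ℝ → ℝ => (ω t - ω 0) ^ 2) P :=
    ((memL2_eval hreg ht).sub (memL2_eval hreg h0)).integrable_sq
  have hmono : covK P t t ≤ ∫ ω, (2 * (ω 0 * ω 0) + 2 * (ω t - ω 0) ^ 2) ∂P := by
    rw [covK]
    refine integral_mono (covK_int hreg ht ht) ((hint0.const_mul 2).add (hintd.const_mul 2)) ?_
    intro ω
    show ω t * ω t ≤ 2 * (ω 0 * ω 0) + 2 * (ω t - ω 0) ^ 2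
    nlinarith [sq_nonneg (ω t - 2 * ω 0)]
  have heq : ∫ ω, (2 * (ω 0 * ω 0) + 2 * (ω t - ω 0) ^ 2) ∂P
      = 2 * covK P 0 0 + 2 * ∫ ω, (ω t - ω 0) ^ 2 ∂P := by
    rw [integral_add (hint0.const_mul 2) (hintd.const_mul 2), integral_const_mul,
      integral_const_mul, covK]
  have hb : (∫ ω, (ω t - ω 0) ^ 2 ∂P) ≤ L := by
    refine le_trans (hreg.2.2.2 0 h0 t ht) ?_
    have h1 : |t - 0| ^ (2 * α) ≤ 1 := by
      apply Real.rpow_le_one (abs_nonneg _) _ (by linarith [hα.1])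
      rw [sub_zero]
      rw [abs_le]
      constructor <;> [linarith [ht.1]; exact ht.2]
    nlinarith
  rw [heq] at hmono
  linarith

end CovFacts
section KsupFacts

variable {P : Measure (ℝ → ℝ)} {α L : ℝ}

lemma covK_abs_le (hreg : memReg α L P) (hα : α ∈ Set.Ioc (0:ℝ) 1) (hL : 0 < L)
    {s t : ℝ} (hs : s ∈ unitI) (ht : t ∈ unitI) :
    |covK P s t| ≤ 2 * covK P 0 0 + 2 * L := by
  set MB := 2 * covK P 0 0 + 2 * L with hMB
  have hMB0 : 0 ≤ MB := by
    have := covK_diag_nonneg P 0; rw [hMB]; linarith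
  have hcs : (covK P s t) ^ 2 ≤ covK P s s * covK P t t := by
    have h := aux_cs (memL2_eval hreg hs) (memL2_eval hreg ht)
    rw [covK, covK_diag_eq, covK_diag_eq]
    exact h
  have h2 : (covK P s t) ^ 2 ≤ MB ^ 2 := by
    refine le_trans hcs ?_
    have h1 := covK_diag_le hreg hα hL hs
    have h2 := covK_diag_le hreg hα hL ht
    have h3 := covK_diag_nonneg P s
    have h4 := covK_diag_nonneg P t
    nlinarith
  calc |covK P s t| = Real.sqrt ((covK P s t) ^ 2) := (Real.sqrt_sq_eq_abs _).symm
    _ ≤ Real.sqrt (MB ^ 2) := Real.sqrt_le_sqrt h2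
    _ = MB := by rw [Real.sqrt_sq hMB0]

lemma KsupK_bddAbove (hreg : memReg α L P) (hα : α ∈ Set.Ioc (0:ℝ) 1) (hL : 0 < L) :
    BddAbove {x | ∃ s ∈ unitI, ∃ t ∈ unitI, x = |covK P s t|} := by
  refine ⟨2 * covK P 0 0 + 2 * L, ?_⟩
  rintro x ⟨s, hs, t, ht, rfl⟩
  exact covK_abs_le hreg hα hL hs ht

lemma covK_le_KsupK (hreg : memReg α L P) (hα : α ∈ Set.Ioc (0:ℝ) 1) (hL : 0 < L)
    {s t : ℝ} (hs : s ∈ unitI) (ht : t ∈ unitI) :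
    |covK P s t| ≤ KsupK (covK P) :=
  le_csSup (KsupK_bddAbove hreg hα hL) ⟨s, hs, t, ht, rfl⟩

lemma KsupK_nonneg (hreg : memReg α L P) (hα : α ∈ Set.Ioc (0:ℝ) 1) (hL : 0 < L) :
    0 ≤ KsupK (covK P) :=
  le_trans (abs_nonneg _) (covK_le_KsupK hreg hα hL zero_mem_unitI zero_mem_unitI)

lemma covK_diag_le_KsupK (hreg : memReg α L P) (hα : α ∈ Set.Ioc (0:ℝ) 1) (hL : 0 < L)
    {t : ℝ} (ht : t ∈ unitI) :
    covK P t t ≤ KsupK (covK P) := by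
  have := covK_le_KsupK hreg hα hL ht ht
  rwa [abs_of_nonneg (covK_diag_nonneg P t)] at this

/-- Hölder continuity of the kernel in the first variable. -/
lemma covK_holder (hreg : memReg α L P) (hα : α ∈ Set.Ioc (0:ℝ) 1) (hL : 0 < L)
    {s s' t : ℝ} (hs : s ∈ unitI) (hs' : s' ∈ unitI) (ht : t ∈ unitI) :
    |covK P s t - covK P s' t| ≤ Real.sqrt (KsupK (covK P) * L) * |s - s'| ^ α := by
  set Kb := KsupK (covK P) with hKbdef
  have hKb0 : 0 ≤ Kb := KsupK_nonneg hreg hα hL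
  have hd : covK P s t - covK P s' t = ∫ ω, (ω s - ω s') * ω t ∂P := by
    rw [covK, covK, ← integral_sub (covK_int hreg hs ht) (covK_int hreg hs' ht)]
    congr 1; funext ω; ring
  have hcs := aux_cs ((memL2_eval hreg hs).sub (memL2_eval hreg hs')) (memL2_eval hreg ht)
  have hH := hreg.2.2.2 s' hs' s hs
  have hdiag : (∫ ω, (ω t) ^ 2 ∂P) ≤ Kb := by
    rw [← covK_diag_eq]; exact covK_diag_le_KsupK hreg hα hL ht
  have hnn1 : 0 ≤ ∫ ω, (ω s - ω s') ^ 2 ∂P := integral_nonneg fun ω => sq_nonneg _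
  have hnn2 : 0 ≤ ∫ ω, (ω t) ^ 2 ∂P := integral_nonneg fun ω => sq_nonneg _
  have hbound : (covK P s t - covK P s' t) ^ 2 ≤ (L * |s - s'| ^ (2 * α)) * Kb := by
    rw [hd]
    refine le_trans hcs ?_
    have hLrn : 0 ≤ L * |s - s'| ^ (2 * α) := by positivity
    exact mul_le_mul hH hdiag hnn2 hLrn
  have hkey : (L * |s - s'| ^ (2 * α)) * Kb = (Real.sqrt (Kb * L) * |s - s'| ^ α) ^ 2 := by
    have h2a : |s - s'| ^ (2 * α) = (|s - s'| ^ α) ^ 2 := by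
      rw [← Real.rpow_natCast (|s - s'| ^ α) 2, ← Real.rpow_mul (abs_nonneg _)]
      norm_num [mul_comm]
    rw [h2a, mul_pow, Real.sq_sqrt (by positivity)]
    ring
  rw [hkey] at hbound
  have hrhs0 : 0 ≤ Real.sqrt (Kb * L) * |s - s'| ^ α := by positivity
  calc |covK P s t - covK P s' t| = Real.sqrt ((covK P s t - covK P s' t) ^ 2) :=
        (Real.sqrt_sq_eq_abs _).symm
    _ ≤ Real.sqrt ((Real.sqrt (Kb * L) * |s - s'| ^ α) ^ 2) := Real.sqrt_le_sqrt hbound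
    _ = _ := Real.sqrt_sq hrhs0

/-- Hölder continuity in the second variable. -/
lemma covK_holder' (hreg : memReg α L P) (hα : α ∈ Set.Ioc (0:ℝ) 1) (hL : 0 < L)
    {s t t' : ℝ} (hs : s ∈ unitI) (ht : t ∈ unitI) (ht' : t' ∈ unitI) :
    |covK P s t - covK P s t'| ≤ Real.sqrt (KsupK (covK P) * L) * |t - t'| ^ α := by
  rw [covK_symm P s t, covK_symm P s t']
  exact covK_holder hreg hα hL ht ht' hs

lemma covK_contOn (hreg : memReg α L P) (hα : α ∈ Set.Ioc (0:ℝ) 1) (hL : 0 < L)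
    {t : ℝ} (ht : t ∈ unitI) :
    ContinuousOn (fun s => covK P s t) unitI :=
  holder_continuousOn hα.1 fun x hx y hy => covK_holder hreg hα hL hx hy ht

end KsupFacts

section HistFacts

/-- The cell of the `l`-th histogram function. -/
def hcell (D : ℕ) (l : Fin D) : Set ℝ :=
  Set.Ioc (((l : ℕ) : ℝ) / D) ((((l : ℕ) : ℝ) + 1) / D)

variable {D : ℕ}

lemma hcell_meas (l : Fin D) : MeasurableSet (hcell D l) := measurableSet_Ioc

lemma histφ_eq (l : Fin D) :
    histφ D l = (hcell D l).indicator (fun _ => Real.sqrt D) := rfl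

lemma hcell_subset (hD : 0 < D) (l : Fin D) : hcell D l ⊆ unitI := by
  intro x hx
  have hD' : (0:ℝ) < D := by exact_mod_cast hD
  have h1 : (0:ℝ) ≤ ((l:ℕ):ℝ) / D := by positivity
  have h2 : (((l:ℕ):ℝ) + 1) / D ≤ 1 := by
    rw [div_le_one hD']
    have : ((l:ℕ):ℝ) + 1 ≤ (D:ℝ) := by exact_mod_cast l.isLt
    linarith
  exact ⟨le_of_lt (lt_of_le_of_lt h1 hx.1), le_trans hx.2 h2⟩

lemma hcell_volume (hD : 0 < D) (l : Fin D) :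
    (volume (hcell D l)).toReal = (D : ℝ)⁻¹ := by
  have hD' : (0:ℝ) < D := by exact_mod_cast hD
  have e : (((l:ℕ):ℝ) + 1) / D - ((l:ℕ):ℝ) / D = (D:ℝ)⁻¹ := by field_simp; ring
  rw [hcell, Real.volume_Ioc, e, ENNReal.toReal_ofReal (by positivity)]

lemma hcell_diam (hD : 0 < D) (l : Fin D) {x y : ℝ} (hx : x ∈ hcell D l) (hy : y ∈ hcell D l) :
    |x - y| ≤ (D : ℝ)⁻¹ := by
  have hD' : (0:ℝ) < D := by exact_mod_cast hD
  have e : (((l:ℕ):ℝ) + 1) / D - ((l:ℕ):ℝ) / D = (D:ℝ)⁻¹ := by field_simp; ring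
  rw [abs_le]
  constructor <;> [linarith [hx.1, hy.2]; linarith [hx.2, hy.1]]

lemma histφ_meas (l : Fin D) : Measurable (histφ D l) :=
  measurable_const.indicator measurableSet_Ioc

lemma histφ_abs_le (l : Fin D) (s : ℝ) : |histφ D l s| ≤ Real.sqrt D := by
  rw [histφ_eq]
  by_cases h : s ∈ hcell D l
  · rw [Set.indicator_of_mem h, abs_of_nonneg (Real.sqrt_nonneg _)]
  · rw [Set.indicator_of_notMem h]; simp [Real.sqrt_nonneg]

instance : IsFiniteMeasure (volume.restrict unitI) := by
  constructor
  rw [Measure.restrict_apply_univ]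
  simp [unitI]

lemma histφ_int (hD : 0 < D) (l : Fin D) : Integrable (histφ D l) (volume.restrict unitI) := by
  rw [histφ_eq]
  exact (integrable_const _).indicator (hcell_meas l)

lemma histφ_integral (hD : 0 < D) (l : Fin D) (g : ℝ → ℝ) :
    (∫ s in unitI, histφ D l s * g s) = Real.sqrt D * ∫ s in hcell D l, g s := by
  have h1 : ∀ s, histφ D l s * g s
      = (hcell D l).indicator (fun s => Real.sqrt D * g s) s := by
    intro s
    rw [histφ_eq]
    by_cases h : s ∈ hcell D l
    · rw [Set.indicator_of_mem h, Set.indicator_of_mem h]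
    · rw [Set.indicator_of_notMem h, Set.indicator_of_notMem h, zero_mul]
  simp_rw [h1]
  rw [integral_indicator (hcell_meas l), Measure.restrict_restrict (hcell_meas l),
    Set.inter_eq_self_of_subset_left (hcell_subset hD l), integral_const_mul]

lemma histφ_zero_outside (l : Fin D) {s : ℝ} (h : s ∉ hcell D l) : histφ D l s = 0 := by
  rw [histφ_eq, Set.indicator_of_notMem h]

lemma histφ_on_cell (l : Fin D) {s : ℝ} (h : s ∈ hcell D l) : histφ D l s = Real.sqrt D := by
  rw [histφ_eq, Set.indicator_of_mem h]

lemma hcell_unique (hD : 0 < D) {l l' : Fin D} {s : ℝ}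
    (h : s ∈ hcell D l) (h' : s ∈ hcell D l') : l = l' := by
  have hD' : (0:ℝ) < D := by exact_mod_cast hD
  by_contra hne
  have key : ∀ (a b : Fin D), (a:ℕ) < (b:ℕ) → s ∈ hcell D a → s ∈ hcell D b → False := by
    intro a b hab ha hb
    have h1 : ((a:ℕ):ℝ) + 1 ≤ ((b:ℕ):ℝ) := by exact_mod_cast hab
    have h2 : (((a:ℕ):ℝ) + 1) / D ≤ ((b:ℕ):ℝ) / D := by
      gcongr
    have := ha.2; have := hb.1
    linarith
  rcases lt_trichotomy ((l:ℕ)) ((l':ℕ)) with hlt | heq | hgt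
  · exact key l l' hlt h h'
  · exact hne (Fin.ext heq)
  · exact key l' l hgt h' h

lemma hcell_exists (hD : 0 < D) {s : ℝ} (hs : s ∈ Set.Ioc (0:ℝ) 1) :
    ∃ l : Fin D, s ∈ hcell D l ∧ ∀ l' : Fin D, l' ≠ l → s ∉ hcell D l' := by
  have hD' : (0:ℝ) < D := by exact_mod_cast hD
  have hsD : 0 < s * D := by nlinarith [hs.1]
  set m := ⌈s * D⌉₊ with hm
  have hm1 : 0 < m := Nat.ceil_pos.2 hsD
  have hmD : m ≤ D := by
    apply Nat.ceil_le.2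
    have : s * D ≤ (D:ℝ) := by nlinarith [hs.2]
    exact_mod_cast this
  have hcast : ((m - 1 : ℕ) : ℝ) = (m : ℝ) - 1 := by
    push_cast [Nat.cast_sub hm1]; ring
  have hmem : s ∈ hcell D ⟨m - 1, by omega⟩ := by
    constructor
    · show ((m - 1 : ℕ) : ℝ) / D < s
      rw [div_lt_iff₀ hD']
      have h2 : ((m - 1 : ℕ) : ℝ) < s * D := by
        exact_mod_cast Nat.lt_ceil.1 (by omega)
      linarith
    · show s ≤ (((m - 1 : ℕ) : ℝ) + 1) / D
      rw [le_div_iff₀ hD']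
      have h3 : s * D ≤ (m : ℝ) := Nat.le_ceil _
      rw [hcast]
      linarith
  exact ⟨_, hmem, fun l' hne hmem' => hne (hcell_unique hD hmem' hmem)⟩

end HistFacts
section IntHelpers

variable {P : Measure (ℝ → ℝ)} {α L : ℝ}

lemma covK_mul_int (hreg : memReg α L P) (hα : α ∈ Set.Ioc (0:ℝ) 1) (hL : 0 < L)
    {u : ℝ} (hu : u ∈ unitI) {g : ℝ → ℝ} (hg : Integrable g (volume.restrict unitI)) :
    Integrable (fun s => covK P s u * g s) (volume.restrict unitI) := by
  refine Integrable.bdd_mul (c := KsupK (covK P)) hg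
    (((covK_contOn hreg hα hL hu).aestronglyMeasurable unitI_meas)) ?_
  filter_upwards [ae_restrict_mem unitI_meas] with s hs
  rw [Real.norm_eq_abs]
  exact covK_le_KsupK hreg hα hL hs hu

lemma histφ_mul_int {D : ℕ} (l : Fin D) {g : ℝ → ℝ}
    (hg : Integrable g (volume.restrict unitI)) :
    Integrable (fun s => histφ D l s * g s) (volume.restrict unitI) := by
  refine Integrable.bdd_mul (c := Real.sqrt D) hg (histφ_meas l).aestronglyMeasurable ?_
  filter_upwards with s
  rw [Real.norm_eq_abs]
  exact histφ_abs_le l s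

lemma integral_holder_contOn {G : ℝ → ℝ → ℝ} {w : ℝ → ℝ} {a : ℝ} (ha : 0 < a)
    {A : Set ℝ} (hA : MeasurableSet A)
    (hint : ∀ u ∈ unitI, IntegrableOn (fun s => G s u) A volume)
    (hw : IntegrableOn w A volume)
    (hH : ∀ u ∈ unitI, ∀ u' ∈ unitI, ∀ s ∈ A, |G s u - G s u'| ≤ w s * |u - u'| ^ a) :
    ContinuousOn (fun u => ∫ s in A, G s u) unitI := by
  apply holder_continuousOn (C := ∫ s in A, w s) ha
  intro x hx y hy
  have hsub : (∫ s in A, G s x) - (∫ s in A, G s y) = ∫ s in A, (G s x - G s y) :=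
    (integral_sub (hint x hx) (hint y hy)).symm
  rw [hsub]
  calc |∫ s in A, (G s x - G s y)| ≤ ∫ s in A, |G s x - G s y| := by
        simpa [Real.norm_eq_abs] using
          norm_integral_le_integral_norm (μ := volume.restrict A) (fun s => G s x - G s y)
    _ ≤ ∫ s in A, w s * |x - y| ^ a :=
        setIntegral_mono_on ((hint x hx).sub (hint y hy)).abs (hw.mul_const _) hA
          (fun s hs => hH x hx y hy s hs)
    _ = (∫ s in A, w s) * |x - y| ^ a := integral_mul_const _ _

lemma integral_comm_const (A : Set ℝ) (g h : ℝ → ℝ) (c : ℝ) :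
    (∫ s in A, g s * (c * h s)) = c * ∫ s in A, g s * h s := by
  rw [← integral_const_mul]
  congr 1; funext s; ring

lemma projD_smul {D : ℕ} (φ : Fin D → ℝ → ℝ) (c : ℝ) (f : ℝ → ℝ) :
    projD φ (fun s => c * f s) = fun t => c * projD φ f t := by
  funext t
  simp only [projD]
  rw [Finset.mul_sum]
  refine Finset.sum_congr rfl fun l _ => ?_
  rw [integral_comm_const]
  ring

lemma intOp_smul (R : ℝ → ℝ → ℝ) (c : ℝ) (f : ℝ → ℝ) :
    intOp R (fun s => c * f s) = fun t => c * intOp R f t := by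
  funext t
  simp only [intOp]
  rw [integral_comm_const]

lemma projD_zero {D : ℕ} (φ : Fin D → ℝ → ℝ) :
    projD φ (fun _ => (0:ℝ)) = fun _ => (0:ℝ) := by
  funext t
  simp [projD]

lemma intOp_zero (R : ℝ → ℝ → ℝ) : intOp R (fun _ => (0:ℝ)) = fun _ => (0:ℝ) := by
  funext t
  simp [intOp]

end IntHelpers
section Kernel

/-- auxiliary kernel integral `J_l(u) = ∫ K(s,u) φ_l(s) ds`. -/
def Jf (P : Measure (ℝ → ℝ)) (D : ℕ) (l : Fin D) (u : ℝ) : ℝ :=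
  ∫ s in unitI, covK P s u * histφ D l s

/-- matrix coefficients of `Π Γ Π`. -/
def cc (P : Measure (ℝ → ℝ)) (D : ℕ) (l l' : Fin D) : ℝ :=
  ∫ u in unitI, histφ D l' u * Jf P D l u

/-- kernel of `Π Γ Π`. -/
def R0 (P : Measure (ℝ → ℝ)) (D : ℕ) (s t : ℝ) : ℝ :=
  ∑ l : Fin D, ∑ l' : Fin D, cc P D l l' * histφ D l s * histφ D l' t

variable {P : Measure (ℝ → ℝ)} {α L : ℝ} {D : ℕ}

lemma unitI_compact : IsCompact unitI := isCompact_Icc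

lemma Jf_contOn (hreg : memReg α L P) (hα : α ∈ Set.Ioc (0:ℝ) 1) (hL : 0 < L)
    (hD : 0 < D) (l : Fin D) : ContinuousOn (Jf P D l) unitI := by
  have := integral_holder_contOn (G := fun s u => covK P s u * histφ D l s)
    (w := fun s => Real.sqrt (KsupK (covK P) * L) * |histφ D l s|) (a := α) hα.1 unitI_meas
    (fun u hu => covK_mul_int hreg hα hL hu (histφ_int hD l))
    (((histφ_int hD l).abs.const_mul _))
    (fun u hu u' hu' s hs => by
      have h1 := covK_holder' hreg hα hL hs hu hu'
      have h2 : |covK P s u * histφ D l s - covK P s u' * histφ D l s|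
          = |covK P s u - covK P s u'| * |histφ D l s| := by
        rw [← abs_mul]; congr 1; ring
      rw [h2]
      calc |covK P s u - covK P s u'| * |histφ D l s|
          ≤ (Real.sqrt (KsupK (covK P) * L) * |u - u'| ^ α) * |histφ D l s| := by
            exact mul_le_mul_of_nonneg_right h1 (abs_nonneg _)
        _ = Real.sqrt (KsupK (covK P) * L) * |histφ D l s| * |u - u'| ^ α := by ring)
  exact this

lemma Jf_int (hreg : memReg α L P) (hα : α ∈ Set.Ioc (0:ℝ) 1) (hL : 0 < L)
    (hD : 0 < D) (l : Fin D) : Integrable (Jf P D l) (volume.restrict unitI) :=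
  (Jf_contOn hreg hα hL hD l).integrableOn_compact unitI_compact

/-- Representation: `Π Γ Π f (t) = ∫ R0(s,t) f(s) ds`. -/
lemma projD_repr (hreg : memReg α L P) (hα : α ∈ Set.Ioc (0:ℝ) 1) (hL : 0 < L)
    (hD : 0 < D) {f : ℝ → ℝ} (hf : Integrable f (volume.restrict unitI)) (t : ℝ) :
    projD (histφ D) (intOp (covK P) (projD (histφ D) f)) t
      = ∫ s in unitI, R0 P D s t * f s := by
  set a : Fin D → ℝ := fun l => ∫ s in unitI, histφ D l s * f s with ha
  -- step 1 : the inner operator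
  have hC1 : ∀ u ∈ unitI, intOp (covK P) (projD (histφ D) f) u = ∑ l, a l * Jf P D l u := by
    intro u hu
    rw [intOp]
    have h1 : ∀ s : ℝ, covK P s u * projD (histφ D) f s
        = ∑ l, covK P s u * (a l * histφ D l s) := by
      intro s; rw [projD, Finset.mul_sum]
    rw [integral_congr_ae (Filter.Eventually.of_forall h1)]
    rw [integral_finset_sum _ (fun l _ =>
      covK_mul_int hreg hα hL hu ((histφ_int hD l).const_mul (a l)))]
    exact Finset.sum_congr rfl fun l _ => integral_comm_const _ _ _ _
  -- step 2 : outer projection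
  have hC2 : projD (histφ D) (intOp (covK P) (projD (histφ D) f)) t
      = ∑ l', (∑ l, a l * cc P D l l') * histφ D l' t := by
    rw [projD]
    refine Finset.sum_congr rfl fun l' _ => ?_
    congr 1
    rw [setIntegral_congr_fun unitI_meas
      (fun u hu => by
        show histφ D l' u * intOp (covK P) (projD (histφ D) f) u
          = histφ D l' u * ∑ l, a l * Jf P D l u
        rw [hC1 u hu] :
        Set.EqOn (fun u => histφ D l' u * intOp (covK P) (projD (histφ D) f) u)
          (fun u => histφ D l' u * ∑ l, a l * Jf P D l u) unitI)]
    have h2 : ∀ u : ℝ, histφ D l' u * (∑ l, a l * Jf P D l u)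
        = ∑ l, histφ D l' u * (a l * Jf P D l u) := fun u => Finset.mul_sum _ _ _
    rw [integral_congr_ae (Filter.Eventually.of_forall h2)]
    rw [integral_finset_sum _ (fun l _ =>
      histφ_mul_int l' ((Jf_int hreg hα hL hD l).const_mul (a l)))]
    refine Finset.sum_congr rfl fun l _ => ?_
    rw [integral_comm_const]
    rfl
  -- step 3 : RHS
  have hC3 : (∫ s in unitI, R0 P D s t * f s)
      = ∑ l', (∑ l, a l * cc P D l l') * histφ D l' t := by
    have h3 : ∀ s : ℝ, R0 P D s t * f s
        = ∑ l, ∑ l', (cc P D l l' * histφ D l' t) * (histφ D l s * f s) := by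
      intro s
      rw [R0, Finset.sum_mul]
      refine Finset.sum_congr rfl fun l _ => ?_
      rw [Finset.sum_mul]
      exact Finset.sum_congr rfl fun l' _ => by ring
    rw [integral_congr_ae (Filter.Eventually.of_forall h3)]
    rw [integral_finset_sum _ (fun l _ => integrable_finset_sum _ (fun l' _ =>
      (histφ_mul_int l hf).const_mul _))]
    have h4 : ∀ l, (∫ s in unitI, ∑ l', (cc P D l l' * histφ D l' t) * (histφ D l s * f s))
        = ∑ l', (cc P D l l' * histφ D l' t) * a l := by
      intro l
      rw [integral_finset_sum _ (fun l' _ => (histφ_mul_int l hf).const_mul _)]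
      exact Finset.sum_congr rfl fun l' _ => integral_const_mul _ _
    rw [Finset.sum_congr rfl fun l _ => h4 l, Finset.sum_comm]
    refine Finset.sum_congr rfl fun l' _ => ?_
    rw [Finset.sum_mul]
    exact Finset.sum_congr rfl fun l _ => by ring
  rw [hC2, ← hC3]

end Kernel
section KernelBound

variable {P : Measure (ℝ → ℝ)} {α L : ℝ} {D : ℕ}

/-- the inner averaged integral is continuous. -/
lemma Iu_contOn (hreg : memReg α L P) (hα : α ∈ Set.Ioc (0:ℝ) 1) (hL : 0 < L)
    (hD : 0 < D) (ls : Fin D) :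
    ContinuousOn (fun u => ∫ s' in hcell D ls, covK P s' u) unitI := by
  refine integral_holder_contOn (G := fun s u => covK P s u)
    (w := fun _ => Real.sqrt (KsupK (covK P) * L)) (a := α) hα.1 (hcell_meas ls)
    (fun u hu => ((covK_contOn hreg hα hL hu).integrableOn_compact unitI_compact).mono_set
      (hcell_subset hD ls))
    (integrableOn_const measure_Ioc_lt_top.ne)
    (fun u hu u' hu' s hs => covK_holder' hreg hα hL (hcell_subset hD ls hs) hu hu')

lemma Iu_intOn (hreg : memReg α L P) (hα : α ∈ Set.Ioc (0:ℝ) 1) (hL : 0 < L)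
    (hD : 0 < D) (ls lt : Fin D) :
    IntegrableOn (fun u => ∫ s' in hcell D ls, covK P s' u) (hcell D lt) volume :=
  (((Iu_contOn hreg hα hL hD ls).integrableOn_compact unitI_compact).mono_set
    (hcell_subset hD lt))

/-- Pointwise bound on the kernel difference. -/
lemma R0_bound (hreg : memReg α L P) (hα : α ∈ Set.Ioc (0:ℝ) 1) (hL : 0 < L)
    (hD : 0 < D) {s t : ℝ} (hs : s ∈ Set.Ioc (0:ℝ) 1) (ht : t ∈ Set.Ioc (0:ℝ) 1) :
    |R0 P D s t - covK P s t|
      ≤ 2 * Real.sqrt (KsupK (covK P) * L) * ((D:ℝ)⁻¹) ^ α := by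
  have hD' : (0:ℝ) < D := by exact_mod_cast hD
  set Kb := KsupK (covK P) with hKbd
  set B0 := 2 * Real.sqrt (Kb * L) * ((D:ℝ)⁻¹) ^ α with hB0d
  have hB00 : 0 ≤ B0 := by positivity
  obtain ⟨ls, hls, hlsu⟩ := hcell_exists (D := D) hD hs
  obtain ⟨lt, hlt, hltu⟩ := hcell_exists (D := D) hD ht
  have hsI : s ∈ unitI := hcell_subset hD ls hls
  have htI : t ∈ unitI := hcell_subset hD lt hlt
  set q := Real.sqrt D with hq
  have hqq : q * q = (D:ℝ) := Real.mul_self_sqrt (Nat.cast_nonneg D)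
  set Iu : ℝ → ℝ := fun u => ∫ s' in hcell D ls, covK P s' u with hIu
  -- collapse the double sum
  have hcol : R0 P D s t = cc P D ls lt * q * q := by
    rw [R0]
    rw [Finset.sum_eq_single ls (fun b _ hb => Finset.sum_eq_zero fun l' _ => by
        rw [histφ_zero_outside b (hlsu b hb)]; ring) (by simp)]
    rw [Finset.sum_eq_single lt (fun b _ hb => by
        rw [histφ_zero_outside b (hltu b hb)]; ring) (by simp)]
    rw [histφ_on_cell ls hls, histφ_on_cell lt hlt]
  -- compute cc
  have hJf : ∀ u : ℝ, Jf P D ls u = q * Iu u := by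
    intro u
    rw [Jf, show (fun s => covK P s u * histφ D ls s) = fun s => histφ D ls s * covK P s u
      from funext fun s => mul_comm _ _]
    exact histφ_integral hD ls (fun s' => covK P s' u)
  have hcc : cc P D ls lt = q * (q * ∫ u in hcell D lt, Iu u) := by
    rw [cc, histφ_integral hD lt (Jf P D ls)]
    congr 1
    rw [show (fun u => Jf P D ls u) = fun u => q * Iu u from funext hJf, integral_const_mul]
  -- inner estimate
  have hinner : ∀ u ∈ hcell D lt, |Iu u - covK P s t * (D:ℝ)⁻¹| ≤ B0 * (D:ℝ)⁻¹ := by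
    intro u hu
    have huI : u ∈ unitI := hcell_subset hD lt hu
    have hconst : (∫ _ in hcell D ls, covK P s t) = (D:ℝ)⁻¹ * covK P s t := by
      rw [setIntegral_const, Measure.real, hcell_volume hD ls]; simp [smul_eq_mul]
    have hKint : IntegrableOn (fun s' => covK P s' u) (hcell D ls) volume :=
      ((covK_contOn hreg hα hL huI).integrableOn_compact unitI_compact).mono_set
        (hcell_subset hD ls)
    have hde : Iu u - covK P s t * (D:ℝ)⁻¹
        = ∫ s' in hcell D ls, (covK P s' u - covK P s t) := by
      rw [integral_sub hKint (integrableOn_const measure_Ioc_lt_top.ne), hconst]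
      ring
    rw [hde]
    have hptw : ∀ s' ∈ hcell D ls, |covK P s' u - covK P s t| ≤ B0 := by
      intro s' hs'
      have hs'I : s' ∈ unitI := hcell_subset hD ls hs'
      have h1 : |covK P s' u - covK P s u| ≤ Real.sqrt (Kb * L) * |s' - s| ^ α :=
        covK_holder hreg hα hL hs'I hsI huI
      have h2 : |covK P s u - covK P s t| ≤ Real.sqrt (Kb * L) * |u - t| ^ α :=
        covK_holder' hreg hα hL hsI huI htI
      have h3 : |s' - s| ^ α ≤ ((D:ℝ)⁻¹) ^ α :=
        Real.rpow_le_rpow (abs_nonneg _) (hcell_diam hD ls hs' hls) hα.1.le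
      have h4 : |u - t| ^ α ≤ ((D:ℝ)⁻¹) ^ α :=
        Real.rpow_le_rpow (abs_nonneg _) (hcell_diam hD lt hu hlt) hα.1.le
      have h5 : |covK P s' u - covK P s t|
          ≤ |covK P s' u - covK P s u| + |covK P s u - covK P s t| := by
        have := abs_sub_le (covK P s' u) (covK P s u) (covK P s t)
        linarith
      have hKL : 0 ≤ Real.sqrt (Kb * L) := Real.sqrt_nonneg _
      rw [hB0d]
      nlinarith [mul_le_mul_of_nonneg_left h3 hKL, mul_le_mul_of_nonneg_left h4 hKL]
    calc |∫ s' in hcell D ls, (covK P s' u - covK P s t)|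
        ≤ ∫ s' in hcell D ls, |covK P s' u - covK P s t| := by
          simpa [Real.norm_eq_abs] using norm_integral_le_integral_norm
            (μ := volume.restrict (hcell D ls)) (fun s' => covK P s' u - covK P s t)
      _ ≤ ∫ _ in hcell D ls, B0 :=
          setIntegral_mono_on
            ((hKint.sub (integrableOn_const measure_Ioc_lt_top.ne)).abs)
            (integrableOn_const measure_Ioc_lt_top.ne) (hcell_meas ls) hptw
      _ = (D:ℝ)⁻¹ * B0 := by rw [setIntegral_const, Measure.real, hcell_volume hD ls]; simp [smul_eq_mul]
      _ = B0 * (D:ℝ)⁻¹ := by ring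
  -- outer estimate
  have hIuint : IntegrableOn Iu (hcell D lt) volume := Iu_intOn hreg hα hL hD ls lt
  have hconst2 : (∫ _ in hcell D lt, covK P s t * (D:ℝ)⁻¹)
      = (D:ℝ)⁻¹ * (covK P s t * (D:ℝ)⁻¹) := by
    rw [setIntegral_const, Measure.real, hcell_volume hD lt]; simp [smul_eq_mul]
  have hde2 : (∫ u in hcell D lt, Iu u) - (D:ℝ)⁻¹ * (covK P s t * (D:ℝ)⁻¹)
      = ∫ u in hcell D lt, (Iu u - covK P s t * (D:ℝ)⁻¹) := by
    rw [integral_sub hIuint (integrableOn_const measure_Ioc_lt_top.ne), hconst2]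
  have hW : |(∫ u in hcell D lt, Iu u) - (D:ℝ)⁻¹ * (covK P s t * (D:ℝ)⁻¹)|
      ≤ (D:ℝ)⁻¹ * (B0 * (D:ℝ)⁻¹) := by
    rw [hde2]
    calc |∫ u in hcell D lt, (Iu u - covK P s t * (D:ℝ)⁻¹)|
        ≤ ∫ u in hcell D lt, |Iu u - covK P s t * (D:ℝ)⁻¹| := by
          simpa [Real.norm_eq_abs] using norm_integral_le_integral_norm
            (μ := volume.restrict (hcell D lt)) (fun u => Iu u - covK P s t * (D:ℝ)⁻¹)
      _ ≤ ∫ _ in hcell D lt, B0 * (D:ℝ)⁻¹ :=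
          setIntegral_mono_on
            ((hIuint.sub (integrableOn_const measure_Ioc_lt_top.ne)).abs)
            (integrableOn_const measure_Ioc_lt_top.ne) (hcell_meas lt) hinner
      _ = (D:ℝ)⁻¹ * (B0 * (D:ℝ)⁻¹) := by
          rw [setIntegral_const, Measure.real, hcell_volume hD lt]; simp [smul_eq_mul]
  -- combine
  have hfin : R0 P D s t - covK P s t
      = (D:ℝ) * (D:ℝ) * ((∫ u in hcell D lt, Iu u) - (D:ℝ)⁻¹ * (covK P s t * (D:ℝ)⁻¹)) := by
    have hDne : (D:ℝ) ≠ 0 := ne_of_gt hD'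
    have hcancel : (D:ℝ) * (D:ℝ) * ((D:ℝ)⁻¹ * (covK P s t * (D:ℝ)⁻¹)) = covK P s t := by
      field_simp
    rw [hcol, hcc, mul_sub, hcancel]
    linear_combination ((q * q + (D:ℝ)) * (∫ u in hcell D lt, Iu u)) * hqq
  rw [hfin]
  rw [abs_mul]
  have h6 : |(D:ℝ) * (D:ℝ)| = (D:ℝ) * (D:ℝ) := abs_of_nonneg (by positivity)
  rw [h6]
  calc (D:ℝ) * (D:ℝ) * |(∫ u in hcell D lt, Iu u) - (D:ℝ)⁻¹ * (covK P s t * (D:ℝ)⁻¹)|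
      ≤ (D:ℝ) * (D:ℝ) * ((D:ℝ)⁻¹ * (B0 * (D:ℝ)⁻¹)) := by
        exact mul_le_mul_of_nonneg_left hW (by positivity)
    _ = B0 := by field_simp
end KernelBound
section KeyBound

variable {P : Measure (ℝ → ℝ)} {α L : ℝ} {D : ℕ}

lemma R0_meas (t : ℝ) : Measurable (fun s => R0 P D s t) := by
  apply Finset.measurable_sum
  intro l _
  apply Finset.measurable_sum
  intro l' _
  exact (measurable_const.mul (histφ_meas l)).mul measurable_const

lemma zero_not_mem_hcell (l : Fin D) : (0:ℝ) ∉ hcell D l := by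
  intro h
  have h1 : (0:ℝ) ≤ ((l:ℕ):ℝ) / D := by positivity
  exact absurd h.1 (not_lt.2 h1)

lemma R0_zero (t : ℝ) : R0 P D 0 t = 0 := by
  rw [R0]
  refine Finset.sum_eq_zero fun l _ => Finset.sum_eq_zero fun l' _ => ?_
  rw [histφ_zero_outside l (zero_not_mem_hcell l)]
  ring

lemma R0_abs_le (hreg : memReg α L P) (hα : α ∈ Set.Ioc (0:ℝ) 1) (hL : 0 < L)
    (hD : 0 < D) {s t : ℝ} (hs : s ∈ unitI) (ht : t ∈ Set.Ioc (0:ℝ) 1) :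
    |R0 P D s t - covK P s t|
      ≤ 2 * Real.sqrt (KsupK (covK P) * L) * ((D:ℝ)⁻¹) ^ α + KsupK (covK P) := by
  have hKb0 : 0 ≤ KsupK (covK P) := KsupK_nonneg hreg hα hL
  have hB00 : (0:ℝ) ≤ 2 * Real.sqrt (KsupK (covK P) * L) * ((D:ℝ)⁻¹) ^ α := by positivity
  rcases eq_or_lt_of_le (hs.1 : (0:ℝ) ≤ s) with h0 | h0
  · rw [← h0, R0_zero, zero_sub, abs_neg]
    have := covK_le_KsupK hreg hα hL (h0 ▸ hs) (Set.Ioc_subset_Icc_self ht)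
    linarith
  · have := R0_bound hreg hα hL hD ⟨h0, hs.2⟩ ht
    linarith

lemma key_bound (hreg : memReg α L P) (hα : α ∈ Set.Ioc (0:ℝ) 1) (hL : 0 < L)
    (hD : 0 < D) {f : ℝ → ℝ} (hfm : Measurable f)
    (hmem : MemLp f 2 (volume.restrict unitI)) (hf1 : (∫ t in unitI, f t ^ 2) ≤ 1) :
    Real.sqrt (∫ t in unitI,
        (projD (histφ D) (intOp (covK P) (projD (histφ D) f)) t - intOp (covK P) f t) ^ 2)
      ≤ 2 * Real.sqrt (KsupK (covK P) * L) * ((D:ℝ)⁻¹) ^ α := by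
  set Kb := KsupK (covK P) with hKbd
  set B0 := 2 * Real.sqrt (Kb * L) * ((D:ℝ)⁻¹) ^ α with hB0d
  have hB00 : 0 ≤ B0 := by positivity
  have hKb0 : 0 ≤ Kb := KsupK_nonneg hreg hα hL
  have hfint : Integrable f (volume.restrict unitI) := hmem.integrable one_le_two
  have hf2nn : 0 ≤ ∫ t in unitI, f t ^ 2 := integral_nonneg fun t => sq_nonneg _
  set T : ℝ → ℝ := fun t =>
    projD (histφ D) (intOp (covK P) (projD (histφ D) f)) t - intOp (covK P) f t with hTd
  -- integrability of R0(·,t) * f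
  have hR0f_int : ∀ t : ℝ, Integrable (fun s => R0 P D s t * f s) (volume.restrict unitI) := by
    intro t
    have h3 : (fun s => R0 P D s t * f s)
        = fun s => ∑ l : Fin D, ∑ l' : Fin D,
            (cc P D l l' * histφ D l' t) * (histφ D l s * f s) := by
      funext s
      rw [R0, Finset.sum_mul]
      refine Finset.sum_congr rfl fun l _ => ?_
      rw [Finset.sum_mul]
      exact Finset.sum_congr rfl fun l' _ => by ring
    rw [h3]
    exact integrable_finset_sum _ (fun l _ => integrable_finset_sum _ (fun l' _ =>
      (histφ_mul_int l hfint).const_mul _))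
  -- representation of T
  have hTrep : ∀ t ∈ unitI, T t = ∫ s in unitI, (R0 P D s t - covK P s t) * f s := by
    intro t ht
    rw [hTd]
    show projD (histφ D) (intOp (covK P) (projD (histφ D) f)) t - intOp (covK P) f t = _
    rw [projD_repr hreg hα hL hD hfint t, intOp,
      ← integral_sub (hR0f_int t) (covK_mul_int hreg hα hL ht hfint)]
    congr 1; funext s; ring
  -- the kernel difference is in L²  with small norm
  have hg_aesm : ∀ t ∈ unitI, AEStronglyMeasurable (fun s => R0 P D s t - covK P s t)
      (volume.restrict unitI) := fun t ht =>
    (R0_meas t).aestronglyMeasurable.sub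
      ((covK_contOn hreg hα hL ht).aestronglyMeasurable unitI_meas)
  have hg_sq_int : ∀ t ∈ Set.Ioc (0:ℝ) 1,
      Integrable (fun s => (R0 P D s t - covK P s t) ^ 2) (volume.restrict unitI) := by
    intro t ht
    have htI : t ∈ unitI := Set.Ioc_subset_Icc_self ht
    refine Integrable.mono' (integrable_const ((B0 + Kb) ^ 2))
      ((hg_aesm t htI).mul (hg_aesm t htI)|>.congr ?_) ?_
    · filter_upwards with s
      simp only [Pi.mul_apply]
      ring
    · filter_upwards [ae_restrict_mem unitI_meas] with s hsI
      rw [Real.norm_eq_abs, abs_of_nonneg (sq_nonneg _), ← sq_abs]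
      have := R0_abs_le hreg hα hL hD hsI ht
      nlinarith [abs_nonneg (R0 P D s t - covK P s t)]
  have hg_mem : ∀ t ∈ Set.Ioc (0:ℝ) 1,
      MemLp (fun s => R0 P D s t - covK P s t) 2 (volume.restrict unitI) := fun t ht =>
    (memLp_two_iff_integrable_sq (hg_aesm t (Set.Ioc_subset_Icc_self ht))).2 (hg_sq_int t ht)
  have hg_sq_le : ∀ t ∈ Set.Ioc (0:ℝ) 1,
      (∫ s in unitI, (R0 P D s t - covK P s t) ^ 2) ≤ B0 ^ 2 := by
    intro t ht
    have hIoc : (∫ s in unitI, (R0 P D s t - covK P s t) ^ 2)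
        = ∫ s in Set.Ioc (0:ℝ) 1, (R0 P D s t - covK P s t) ^ 2 := by
      rw [show unitI = Set.Icc (0:ℝ) 1 from rfl, integral_Icc_eq_integral_Ioc]
    rw [hIoc]
    calc (∫ s in Set.Ioc (0:ℝ) 1, (R0 P D s t - covK P s t) ^ 2)
        ≤ ∫ _ in Set.Ioc (0:ℝ) 1, B0 ^ 2 := by
          have hmono : IntegrableOn (fun s => (R0 P D s t - covK P s t) ^ 2) unitI volume :=
            hg_sq_int t ht
          refine setIntegral_mono_on (hmono.mono_set Set.Ioc_subset_Icc_self)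
            (integrableOn_const measure_Ioc_lt_top.ne) measurableSet_Ioc ?_
          intro s hsIoc
          rw [← sq_abs]
          have h1 := R0_bound hreg hα hL hD hsIoc ht
          nlinarith [abs_nonneg (R0 P D s t - covK P s t)]
      _ = B0 ^ 2 := by
          rw [setIntegral_const, Measure.real, Real.volume_Ioc]
          norm_num
  -- pointwise bound for T on (0,1]
  have hT_le : ∀ t ∈ Set.Ioc (0:ℝ) 1, (T t) ^ 2 ≤ B0 ^ 2 := by
    intro t ht
    have htI : t ∈ unitI := Set.Ioc_subset_Icc_self ht
    rw [hTrep t htI]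
    calc (∫ s in unitI, (R0 P D s t - covK P s t) * f s) ^ 2
        ≤ (∫ s in unitI, (R0 P D s t - covK P s t) ^ 2) * (∫ s in unitI, f s ^ 2) :=
          aux_cs (hg_mem t ht) hmem
      _ ≤ B0 ^ 2 * 1 := mul_le_mul (hg_sq_le t ht) hf1 hf2nn (sq_nonneg _)
      _ = B0 ^ 2 := mul_one _
  -- measurability of T
  have hT_aesm : AEStronglyMeasurable T (volume.restrict unitI) := by
    have h1 : Measurable (fun t =>
        projD (histφ D) (intOp (covK P) (projD (histφ D) f)) t) := by
      apply Finset.measurable_sum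
      intro l _
      exact measurable_const.mul (histφ_meas l)
    have h2 : ContinuousOn (fun t => intOp (covK P) f t) unitI := by
      refine integral_holder_contOn (G := fun s t => covK P s t * f s)
        (w := fun s => Real.sqrt (Kb * L) * |f s|) (a := α) hα.1 unitI_meas
        (fun u hu => covK_mul_int hreg hα hL hu hfint) (hfint.abs.const_mul _) ?_
      intro u hu u' hu' s hs
      have h1' := covK_holder' hreg hα hL hs hu hu'
      have h2' : |covK P s u * f s - covK P s u' * f s|
          = |covK P s u - covK P s u'| * |f s| := by
        rw [← abs_mul]; congr 1; ring
      rw [h2']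
      calc |covK P s u - covK P s u'| * |f s|
          ≤ (Real.sqrt (Kb * L) * |u - u'| ^ α) * |f s| :=
            mul_le_mul_of_nonneg_right h1' (abs_nonneg _)
        _ = Real.sqrt (Kb * L) * |f s| * |u - u'| ^ α := by ring
    exact h1.aestronglyMeasurable.sub (h2.aestronglyMeasurable unitI_meas)
  have hT_aesm' : AEStronglyMeasurable T (volume.restrict (Set.Ioc (0:ℝ) 1)) :=
    hT_aesm.mono_measure (Measure.restrict_mono Set.Ioc_subset_Icc_self le_rfl)
  have hT_sq_int : IntegrableOn (fun t => (T t) ^ 2) (Set.Ioc (0:ℝ) 1) volume := by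
    refine Integrable.mono' (integrable_const (B0 ^ 2))
      ((hT_aesm'.mul hT_aesm').congr ?_) ?_
    · filter_upwards with t
      simp only [Pi.mul_apply]
      ring
    · filter_upwards [ae_restrict_mem measurableSet_Ioc] with t ht
      rw [Real.norm_eq_abs, abs_of_nonneg (sq_nonneg _)]
      exact hT_le t ht
  -- integral bound
  have hint_le : (∫ t in unitI, (T t) ^ 2) ≤ B0 ^ 2 := by
    have hIoc : (∫ t in unitI, (T t) ^ 2) = ∫ t in Set.Ioc (0:ℝ) 1, (T t) ^ 2 := by
      rw [show unitI = Set.Icc (0:ℝ) 1 from rfl, integral_Icc_eq_integral_Ioc]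
    rw [hIoc]
    calc (∫ t in Set.Ioc (0:ℝ) 1, (T t) ^ 2)
        ≤ ∫ _ in Set.Ioc (0:ℝ) 1, B0 ^ 2 :=
          setIntegral_mono_on hT_sq_int (integrableOn_const measure_Ioc_lt_top.ne)
            measurableSet_Ioc hT_le
      _ = B0 ^ 2 := by
          rw [setIntegral_const, Measure.real, Real.volume_Ioc]
          norm_num
  calc Real.sqrt (∫ t in unitI, (T t) ^ 2) ≤ Real.sqrt (B0 ^ 2) := Real.sqrt_le_sqrt hint_le
    _ = B0 := Real.sqrt_sq hB00

end KeyBound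

/-- Proposition 3, first bound: for the histogram system of dimension `D`, if `P_Z ∈ R_α(L)`
then `‖Π_D Γ Π_D - Γ‖_∞² ≤ 16 L ‖K‖_∞ / (α+1)² · D^{-2α}`. -/
theorem stmt7
    (P : Measure (ℝ → ℝ)) (α L : ℝ) (hα : α ∈ Set.Ioc (0 : ℝ) 1) (hL : 0 < L)
    (hreg : memReg α L P) (D : ℕ) (hD : 0 < D) :
    (opNorm (fun f t => projD (histφ D) (intOp (covK P) (projD (histφ D) f)) t
        - intOp (covK P) f t)) ^ 2
      ≤ 16 * L * KsupK (covK P) / (α + 1) ^ 2 * (D : ℝ) ^ (-(2 * α)) := by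
  have hKb0 : 0 ≤ KsupK (covK P) := KsupK_nonneg hreg hα hL
  have hRHS0 : 0 ≤ 16 * L * KsupK (covK P) / (α + 1) ^ 2 * (D : ℝ) ^ (-(2 * α)) := by positivity
  set Kb := KsupK (covK P) with hKbd
  set B0 := 2 * Real.sqrt (Kb * L) * ((D:ℝ)⁻¹) ^ α with hB0d
  have hB00 : 0 ≤ B0 := by positivity
  have hD' : (0:ℝ) < D := by exact_mod_cast hD
  -- numeric comparison
  have hB0sq : B0 ^ 2 ≤ 16 * L * Kb / (α + 1) ^ 2 * (D : ℝ) ^ (-(2 * α)) := by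
    have hXeq : (((D:ℝ)⁻¹) ^ α) ^ 2 = (D:ℝ) ^ (-(2 * α)) := by
      rw [← Real.rpow_natCast (((D:ℝ)⁻¹) ^ α) 2,
        ← Real.rpow_mul (inv_nonneg.2 (le_of_lt hD')),
        Real.inv_rpow (le_of_lt hD'), ← Real.rpow_neg (le_of_lt hD')]
      norm_num
      ring_nf
    have hsq : (Real.sqrt (Kb * L)) ^ 2 = Kb * L := Real.sq_sqrt (by positivity)
    have hBeq : B0 ^ 2 = 4 * (Kb * L) * (D:ℝ) ^ (-(2 * α)) := by
      rw [hB0d, mul_pow, mul_pow, hsq, hXeq]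
      ring
    have hX0 : (0:ℝ) ≤ (D:ℝ) ^ (-(2 * α)) := Real.rpow_nonneg (by positivity) _
    have h3 : (0:ℝ) < (α + 1) ^ 2 := by nlinarith [hα.1]
    have h4 : (4:ℝ) ≤ 16 / (α + 1) ^ 2 := by
      rw [le_div_iff₀ h3]
      nlinarith [hα.1, hα.2]
    calc B0 ^ 2 = 4 * (Kb * L) * (D:ℝ) ^ (-(2 * α)) := hBeq
      _ ≤ (16 / (α + 1) ^ 2) * (Kb * L) * (D:ℝ) ^ (-(2 * α)) := by
          have h5 : 4 * (Kb * L) ≤ (16 / (α + 1) ^ 2) * (Kb * L) :=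
            mul_le_mul_of_nonneg_right h4 (by positivity)
          exact mul_le_mul_of_nonneg_right h5 hX0
      _ = 16 * L * Kb / (α + 1) ^ 2 * (D : ℝ) ^ (-(2 * α)) := by ring
  set T : (ℝ → ℝ) → ℝ → ℝ := fun f t =>
    projD (histφ D) (intOp (covK P) (projD (histφ D) f)) t - intOp (covK P) f t with hT
  set S : Set ℝ := {x | ∃ f : ℝ → ℝ, Measurable f ∧ (∫ t in unitI, (f t) ^ 2) ≤ 1 ∧
    x = Real.sqrt (∫ t in unitI, (T f t) ^ 2)} with hS
  show (sSup S) ^ 2 ≤ _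
  -- T kills the zero function
  have hT0 : ∀ t : ℝ, T (fun _ => (0:ℝ)) t = 0 := by
    intro t
    show projD (histφ D) (intOp (covK P) (projD (histφ D) (fun _ => (0:ℝ)))) t
      - intOp (covK P) (fun _ => (0:ℝ)) t = 0
    rw [projD_zero, intOp_zero, projD_zero]
    simp
  -- T is homogeneous
  have hTsmul : ∀ (c : ℝ) (f : ℝ → ℝ) (t : ℝ), T (fun s => c * f s) t = c * T f t := by
    intro c f t
    show projD (histφ D) (intOp (covK P) (projD (histφ D) (fun s => c * f s))) t
        - intOp (covK P) (fun s => c * f s) t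
      = c * (projD (histφ D) (intOp (covK P) (projD (histφ D) f)) t - intOp (covK P) f t)
    simp only [projD_smul, intOp_smul]
    ring
  by_cases hbdd : BddAbove S
  · have h0S : (0:ℝ) ∈ S := by
      refine ⟨fun _ => (0:ℝ), measurable_const, by simp, ?_⟩
      simp [hT0]
    have hsup0 : 0 ≤ sSup S := le_csSup hbdd h0S
    have hle : ∀ x ∈ S, x ≤ B0 := by
      rintro x ⟨f, hfm, hf1, rfl⟩
      by_cases hfi : Integrable (fun t => f t ^ 2) (volume.restrict unitI)
      · exact key_bound hreg hα hL hD hfm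
          ((memLp_two_iff_integrable_sq hfm.aestronglyMeasurable).2 hfi) hf1
      · -- non-square-integrable f : the value scales, contradiction with boundedness
        by_contra hgt
        push_neg at hgt
        set x := Real.sqrt (∫ t in unitI, (T f t) ^ 2) with hx
        have hxpos : 0 < x := lt_of_le_of_lt hB00 hgt
        obtain ⟨M, hM⟩ := hbdd
        have hxS : x ∈ S := ⟨f, hfm, hf1, rfl⟩
        have hMx : x ≤ M := hM hxS
        set c := (M + 1) / x with hc
        have hcpos : 0 < c := div_pos (by linarith) hxpos
        have hcx : c * x ∈ S := by
          refine ⟨fun s => c * f s, hfm.const_mul c, ?_, ?_⟩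
          · have hni : ¬ Integrable (fun t => (c * f t) ^ 2) (volume.restrict unitI) := by
              intro h
              apply hfi
              have h2 := h.const_mul ((c ^ 2)⁻¹)
              refine h2.congr (Filter.Eventually.of_forall fun t => ?_)
              field_simp
            rw [integral_undef hni]
            norm_num
          · have heq : ∀ t : ℝ, (T (fun s => c * f s) t) ^ 2 = c ^ 2 * (T f t) ^ 2 := by
              intro t
              rw [hTsmul]
              ring
            rw [integral_congr_ae (Filter.Eventually.of_forall heq), integral_const_mul,
              Real.sqrt_mul (sq_nonneg c), Real.sqrt_sq_eq_abs, abs_of_pos hcpos]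
        have hcontra : c * x ≤ M := hM hcx
        have : c * x = M + 1 := by
          rw [hc]
          field_simp
        linarith
    have hsup : sSup S ≤ B0 := csSup_le ⟨0, h0S⟩ hle
    calc (sSup S) ^ 2 ≤ B0 ^ 2 := pow_le_pow_left₀ hsup0 hsup 2
      _ ≤ _ := hB0sq
  · rw [Real.sSup_of_not_bddAbove hbdd]
    simpa using hRHS0
end
end

section
/- Let Γ and Γ̂ be two compact self-adjoint operators on a separable Hilbert space H admitting spectral decompositions Γ = Σ_{d≥1} μ_d ⟨·, η_d⟩ η_d and Γ̂ = Σ_{d≥1} μ̂_d ⟨·, η̂_d⟩ η̂_d, where (η_d)_{d≥1} and (η̂_d)_{d≥1} are orthonormal families and the eigenvalue sequences (μ_d)_{d≥1} and (μ̂_d)_{d≥1} are sorted in decreasing order. Fix d ≥ 1 and suppose the eigenspace of Γ associated with μ_d is one-dimensional, with strict gaps μ_{d−1} > μ_d > μ_{d+1} (only μ_1 > μ_2 when d = 1). Set b_1 = 8(μ_1−μ_2)^{−2} and, for d ≥ 2, b_d = 8/min(μ_d−μ_{d+1}, μ_{d−1}−μ_d)². Then ‖η̂_d − sign(⟨η̂_d,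 η_d⟩) η_d‖ ≤ b_d^{1/2} ‖Γ̂ − Γ‖_∞, where ‖·‖_∞ is the operator norm on H. -/
open scoped RealInnerProductSpace

noncomputable section

section AuxBosq
variable {H : Type*} [NormedAddCommGroup H] [InnerProductSpace ℝ H]

lemma aux_eig (A : H →L[ℝ] H) (μ : ℕ → ℝ) (η : ℕ → H) (hon : Orthonormal ℝ η)
    (hdec : ∀ f : H, A f = ∑' j, (μ j * ⟪η j, f⟫) • η j) (k : ℕ) :
    A (η k) = μ k • η k := by
  have hit := orthonormal_iff_ite.mp hon
  rw [hdec, tsum_eq_single k]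
  · have := hit k k
    simp at this
    rw [real_inner_self_eq_norm_sq, hon.1 k, one_pow, mul_one]
  · intro j hjk
    have := hit j k
    simp [hjk] at this
    simp [this]

lemma aux_nonneg (A : H →L[ℝ] H) (hc : IsCompactOperator (⇑A)) (μ : ℕ → ℝ) (η : ℕ → H)
    (hon : Orthonormal ℝ η) (hmono : Antitone μ)
    (heig : ∀ k, A (η k) = μ k • η k) (k : ℕ) : 0 ≤ μ k := by
  by_contra hneg
  push_neg at hneg
  set δ : ℝ := -μ k with hδ
  have hδpos : 0 < δ := by simp [hδ]; linarith
  have hc' : IsCompactOperator (⇑(A.toLinearMap)) := hc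
  obtain ⟨K, hK, hsub⟩ := hc'.image_closedBall_subset_compact (𝕜₁ := ℝ) 1
  have htb : TotallyBounded K := hK.totallyBounded
  rw [Metric.totallyBounded_iff] at htb
  obtain ⟨t, htfin, htcov⟩ := htb (δ / 2) (by linarith)
  have hmem : ∀ j : ℕ, A (η (k + j)) ∈ K := by
    intro j
    apply hsub
    exact ⟨η (k + j), by simp [hon.1 (k + j)], rfl⟩
  -- choose centers
  have hcenter : ∀ j : ℕ, ∃ y ∈ t, A (η (k + j)) ∈ Metric.ball y (δ / 2) := by
    intro j
    have := htcov (hmem j)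
    simpa using this
  choose y hyt hyb using hcenter
  haveI : Finite t := htfin
  have : ∃ i j : ℕ, i ≠ j ∧ (⟨y i, hyt i⟩ : t) = ⟨y j, hyt j⟩ :=
    Finite.exists_ne_map_eq_of_infinite _
  obtain ⟨i, j, hij, hyeq⟩ := this
  have hyeq' : y i = y j := congrArg Subtype.val hyeq
  have hdist : dist (A (η (k + i))) (A (η (k + j))) < δ := by
    calc dist (A (η (k + i))) (A (η (k + j)))
        ≤ dist (A (η (k + i))) (y i) + dist (y j) (A (η (k + j))) := by
          rw [hyeq']; exact dist_triangle _ _ _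
      _ < δ / 2 + δ / 2 := by
          apply add_lt_add
          · exact Metric.mem_ball.mp (hyb i)
          · rw [dist_comm]; exact Metric.mem_ball.mp (hyb j)
      _ = δ := by ring
  -- but the distance squared is at least 2 δ^2
  have hne : k + i ≠ k + j := by omega
  have hinner : ⟪η (k + i), η (k + j)⟫ = 0 := hon.2 hne
  have hno : ∀ m : ℕ, ‖A (η m)‖ = |μ m| := by
    intro m; rw [heig m, norm_smul, hon.1 m, mul_one, Real.norm_eq_abs]
  have hd2 : dist (A (η (k + i))) (A (η (k + j)))^2 = μ (k+i)^2 + μ (k+j)^2 := by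
    rw [dist_eq_norm, heig, heig, @norm_sub_sq_real, norm_smul, norm_smul,
      real_inner_smul_left, real_inner_smul_right, hinner, hon.1, hon.1]
    simp [sq_abs]
  have hμi : μ (k + i) ≤ -δ := by have := hmono (Nat.le_add_right k i); simp [hδ] at *; linarith
  have hμj : μ (k + j) ≤ -δ := by have := hmono (Nat.le_add_right k j); simp [hδ] at *; linarith
  nlinarith [dist_nonneg (x := A (η (k + i))) (y := A (η (k + j)))]

variable {H : Type*} [NormedAddCommGroup H] [InnerProductSpace ℝ H]

/-- In the span of `d+1` orthonormal vectors there is a unit vector orthogonal to any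
given `d` vectors. -/
lemma aux_exists (η ηB : ℕ → H) (hon : Orthonormal ℝ η) (d : ℕ) :
    ∃ b : Fin (d + 1) → ℝ, (∑ i, b i ^ 2 = 1) ∧
      (∀ j < d, ⟪ηB j, ∑ i, b i • η (i : ℕ)⟫ = 0) := by
  classical
  -- linear map sending coefficients to the d inner products
  let L : (Fin (d + 1) → ℝ) →ₗ[ℝ] H :=
    { toFun := fun a => ∑ i, a i • η (i : ℕ)
      map_add' := by intro a b; simp [add_smul, Finset.sum_add_distrib]
      map_smul' := by intro c a; simp [smul_smul, Finset.smul_sum] }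
  let T : (Fin (d + 1) → ℝ) →ₗ[ℝ] (Fin d → ℝ) :=
    LinearMap.pi (fun j => ((innerSL ℝ (ηB (j : ℕ))).toLinearMap).comp L)
  have hrank : Module.finrank ℝ (Fin d → ℝ) < Module.finrank ℝ (Fin (d + 1) → ℝ) := by
    simp [Module.finrank_pi]
  have hker : LinearMap.ker T ≠ ⊥ := by
    intro hbot
    have hinj : Function.Injective T := LinearMap.ker_eq_bot.mp hbot
    have := LinearMap.finrank_le_finrank_of_injective hinj
    omega
  obtain ⟨a, haker, ha0⟩ := Submodule.ne_bot_iff _ |>.mp hker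
  have hsum : 0 < ∑ i, a i ^ 2 := by
    rcases Function.ne_iff.mp ha0 with ⟨i, hi⟩
    have : (0:ℝ) < a i ^ 2 := (sq_nonneg _).lt_of_ne (Ne.symm (pow_ne_zero 2 hi))
    exact Finset.sum_pos' (fun j _ => sq_nonneg _) ⟨i, Finset.mem_univ i, this⟩
  set n : ℝ := Real.sqrt (∑ i, a i ^ 2) with hn
  have hnpos : 0 < n := Real.sqrt_pos.mpr hsum
  refine ⟨fun i => a i / n, ?_, ?_⟩
  · have : ∑ i, (a i / n) ^ 2 = (∑ i, a i ^ 2) / n ^ 2 := by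
      rw [Finset.sum_div]; congr 1; funext i; ring
    rw [this, hn, Real.sq_sqrt hsum.le, div_self hsum.ne']
  · intro j hj
    have hTa : T a = 0 := haker
    have hTaj : ⟪ηB j, ∑ i, a i • η (i : ℕ)⟫ = 0 := by
      have := congrFun hTa ⟨j, hj⟩
      simpa [T, L] using this
    have : (∑ i, (a i / n) • η (i : ℕ)) = n⁻¹ • ∑ i, a i • η (i : ℕ) := by
      rw [Finset.smul_sum]; congr 1; funext i; rw [smul_smul]; congr 1; ring
    rw [this, real_inner_smul_right, hTaj, mul_zero]

/-- Lower bound for the quadratic form on the span of the first `d+1` eigenvectors. -/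
lemma aux_quad_ge (A : H →L[ℝ] H) (μ : ℕ → ℝ) (η : ℕ → H) (hon : Orthonormal ℝ η)
    (hmono : Antitone μ) (heig : ∀ k, A (η k) = μ k • η k)
    (d : ℕ) (b : Fin (d + 1) → ℝ) (hb : ∑ i, b i ^ 2 = 1) :
    μ d ≤ ⟪A (∑ i, b i • η (i : ℕ)), ∑ i, b i • η (i : ℕ)⟫ := by
  classical
  have hA : A (∑ i, b i • η (i : ℕ)) = ∑ i, (b i * μ (i : ℕ)) • η (i : ℕ) := by
    rw [map_sum]
    congr 1; funext i
    rw [map_smul, heig, smul_smul]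
  rw [hA]
  have honF : Orthonormal ℝ (fun i : Fin (d + 1) => η (i : ℕ)) :=
    hon.comp _ Fin.val_injective
  rw [honF.inner_sum]
  have : ∀ i : Fin (d + 1), μ d * (b i ^ 2) ≤ (starRingEnd ℝ) (b i * μ (i : ℕ)) * b i := by
    intro i
    have hle : μ (i : ℕ) ≥ μ d := hmono (by omega)
    simp only [RCLike.star_def, starRingEnd_apply, star_trivial]
    nlinarith [sq_nonneg (b i)]
  calc μ d = μ d * ∑ i, b i ^ 2 := by rw [hb, mul_one]
    _ = ∑ i, μ d * b i ^ 2 := by rw [Finset.mul_sum]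
    _ ≤ _ := Finset.sum_le_sum (fun i _ => this i)

/-- Upper bound for the quadratic form on vectors orthogonal to the first `d` eigenvectors. -/
lemma aux_quad_le (B : H →L[ℝ] H) (μ : ℕ → ℝ) (η : ℕ → H) (hon : Orthonormal ℝ η)
    (hmono : Antitone μ)
    (hdec : ∀ f : H, B f = ∑' j, (μ j * ⟪η j, f⟫) • η j)
    (d : ℕ) (hd0 : 0 ≤ μ d) (x : H) (hx : ‖x‖ = 1)
    (hortho : ∀ j < d, ⟪η j, x⟫ = 0) :
    ⟪B x, x⟫ ≤ μ d := by
  classical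
  set G : ℕ → H := fun j => (μ j * ⟪η j, x⟫) • η j with hG
  by_cases hGsum : Summable G
  · have hBx : ⟪x, B x⟫ = ∑' j, μ j * ⟪η j, x⟫ ^ 2 := by
      have hmt : ⟪x, ∑' z, G z⟫ = ∑' z, ⟪x, G z⟫ := by
        have h := (innerSL ℝ x).map_tsum hGsum
        simpa using h
      rw [hdec x, ← hG, hmt]
      congr 1; funext j
      rw [hG, real_inner_smul_right, real_inner_comm x (η j)]
      ring
    have hsum1 : Summable (fun j => μ j * ⟪η j, x⟫ ^ 2) := by
      have hs : Summable (fun j => (⟪x, G j⟫ : ℝ)) := by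
        have h := (innerSL ℝ x).summable hGsum
        simpa using h
      refine hs.congr (fun j => ?_)
      rw [hG, real_inner_smul_right, real_inner_comm x (η j)]
      ring
    have hsum2 : Summable (fun j => ⟪η j, x⟫ ^ 2) := by
      have := hon.inner_products_summable (x := x)
      refine this.congr (fun j => ?_)
      rw [Real.norm_eq_abs, sq_abs]
    have hterm : ∀ j, μ j * ⟪η j, x⟫ ^ 2 ≤ μ d * ⟪η j, x⟫ ^ 2 := by
      intro j
      rcases lt_or_ge j d with hj | hj
      · rw [hortho j hj]; simp
      · have := hmono hj
        nlinarith [sq_nonneg (⟪η j, x⟫ : ℝ)]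
    have hbessel : ∑' j, ⟪η j, x⟫ ^ 2 ≤ 1 := by
      have := hon.tsum_inner_products_le (x := x)
      rw [hx] at this
      simpa [Real.norm_eq_abs, sq_abs] using this
    calc ⟪B x, x⟫ = ⟪x, B x⟫ := real_inner_comm _ _
      _ = ∑' j, μ j * ⟪η j, x⟫ ^ 2 := hBx
      _ ≤ ∑' j, μ d * ⟪η j, x⟫ ^ 2 := Summable.tsum_le_tsum hterm hsum1 (hsum2.mul_left _)
      _ = μ d * ∑' j, ⟪η j, x⟫ ^ 2 := tsum_mul_left
      _ ≤ μ d * 1 := by apply mul_le_mul_of_nonneg_left hbessel hd0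
      _ = μ d := mul_one _
  · rw [hdec x, ← hG, tsum_eq_zero_of_not_summable hGsum]
    simpa using hd0

/-- One-sided Weyl inequality. -/
lemma aux_weyl (A B : H →L[ℝ] H) (μA μB : ℕ → ℝ) (ηA ηB : ℕ → H)
    (honA : Orthonormal ℝ ηA) (honB : Orthonormal ℝ ηB)
    (hmonoA : Antitone μA) (hmonoB : Antitone μB)
    (heigA : ∀ k, A (ηA k) = μA k • ηA k)
    (hdecB : ∀ f : H, B f = ∑' j, (μB j * ⟪ηB j, f⟫) • ηB j)
    (d : ℕ) (hBd : 0 ≤ μB d) :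
    μA d ≤ μB d + ‖B - A‖ := by
  obtain ⟨b, hb, horth⟩ := aux_exists ηA ηB honA d
  set x : H := ∑ i, b i • ηA (i : ℕ) with hxdef
  have hx : ‖x‖ = 1 := by
    have honF : Orthonormal ℝ (fun i : Fin (d + 1) => ηA (i : ℕ)) :=
      honA.comp _ Fin.val_injective
    have h2 : ⟪x, x⟫ = 1 := by
      rw [hxdef, honF.inner_sum]
      simpa [sq] using hb
    have := real_inner_self_eq_norm_sq x
    nlinarith [norm_nonneg x]
  have h1 : μA d ≤ ⟪A x, x⟫ := aux_quad_ge A μA ηA honA hmonoA heigA d b hb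
  have h2 : ⟪B x, x⟫ ≤ μB d := aux_quad_le B μB ηB honB hmonoB hdecB d hBd x hx horth
  have h3 : ⟪A x, x⟫ - ⟪B x, x⟫ ≤ ‖B - A‖ := by
    have : ⟪A x, x⟫ - ⟪B x, x⟫ = -⟪(B - A) x, x⟫ := by
      rw [ContinuousLinearMap.sub_apply, inner_sub_left]; ring
    rw [this]
    calc -⟪(B - A) x, x⟫ ≤ |⟪(B - A) x, x⟫| := neg_le_abs _
      _ ≤ ‖(B - A) x‖ * ‖x‖ := abs_real_inner_le_norm _ _
      _ ≤ (‖B - A‖ * ‖x‖) * ‖x‖ := by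
          apply mul_le_mul_of_nonneg_right ((B - A).le_opNorm x) (norm_nonneg x)
      _ = ‖B - A‖ := by rw [hx]; ring
  linarith

end AuxBosq

set_option maxHeartbeats 2000000

/-- Bosq's inequality for eigenfunctions: if `Γ` and `Γ̂` are compact self-adjoint operators
on a separable Hilbert space with spectral decompositions as above, eigenvalues sorted in
decreasing order, and if the eigenspace of `Γ` at `μ_d` is one-dimensional with strict gaps
to its neighbours, then `‖η̂_d - sign(⟨η̂_d, η_d⟩) η_d‖ ≤ b_d^{1/2} ‖Γ̂ - Γ‖_∞`. -/
theorem stmt13 {H : Type*} [NormedAddCommGroup H] [InnerProductSpace ℝ H]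
    [SecondCountableTopology H]
    (Γ Γh : H →L[ℝ] H)
    (hΓc : IsCompactOperator (⇑Γ)) (hΓhc : IsCompactOperator (⇑Γh))
    (hΓsa : ∀ x y : H, ⟪Γ x, y⟫ = ⟪x, Γ y⟫)
    (hΓhsa : ∀ x y : H, ⟪Γh x, y⟫ = ⟪x, Γh y⟫)
    (μ μh : ℕ → ℝ) (η ηh : ℕ → H)
    (hon : Orthonormal ℝ η) (honh : Orthonormal ℝ ηh)
    (hmono : Antitone μ) (hmonoh : Antitone μh)
    (hdec : ∀ f : H, Γ f = ∑' d, (μ d * ⟪η d, f⟫) • η d)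
    (hdech : ∀ f : H, Γh f = ∑' d, (μh d * ⟪ηh d, f⟫) • ηh d)
    (d : ℕ)
    (hgap : (d = 0 → μ 1 < μ 0) ∧ (d ≠ 0 → μ d < μ (d - 1) ∧ μ (d + 1) < μ d))
    (hsimple : ∀ f : H, Γ f = μ d • f → ∃ c : ℝ, f = c • η d) :
    ‖ηh d - (if 0 ≤ ⟪ηh d, η d⟫ then (1 : ℝ) else -1) • η d‖
      ≤ Real.sqrt (bGap μ d) * ‖Γh - Γ‖ := by
  classical
  have heig := aux_eig Γ μ η hon hdec
  have heigh := aux_eig Γh μh ηh honh hdech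
  have nn : ∀ k, 0 ≤ μ k := aux_nonneg Γ hΓc μ η hon hmono heig
  have nnh : ∀ k, 0 ≤ μh k := aux_nonneg Γh hΓhc μh ηh honh hmonoh heigh
  set ε := ‖Γh - Γ‖ with hε
  have hε0 : 0 ≤ ε := norm_nonneg _
  set g : ℝ := if d = 0 then μ 0 - μ 1 else min (μ d - μ (d + 1)) (μ (d - 1) - μ d) with hgdef
  have hbg : bGap μ d = 8 / g ^ 2 := by
    rw [bGap, hgdef]; split_ifs <;> rfl
  have hgdown : g ≤ μ d - μ (d + 1) := by
    rw [hgdef]; split_ifs with h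
    · subst h; simp
    · exact min_le_left _ _
  have hgup : d ≠ 0 → g ≤ μ (d - 1) - μ d := by
    intro h; rw [hgdef, if_neg h]; exact min_le_right _ _
  have hg : 0 < g := by
    rw [hgdef]; split_ifs with h
    · have := hgap.1 h; linarith
    · obtain ⟨h1, h2⟩ := hgap.2 h; exact lt_min (by linarith) (by linarith)
  have hμdg : g ≤ μ d := le_trans hgdown (by linarith [nn (d + 1)])
  have w1 : μ d ≤ μh d + ε := aux_weyl Γ Γh μ μh η ηh hon honh hmono hmonoh heig hdech d (nnh d)
  have w2 : μh d ≤ μ d + ε := by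
    have := aux_weyl Γh Γ μh μ ηh η honh hon hmonoh hmono heigh hdec d (nn d)
    rwa [show ‖Γ - Γh‖ = ε from by rw [hε, norm_sub_rev]] at this
  set s : ℝ := if 0 ≤ ⟪ηh d, η d⟫ then (1 : ℝ) else -1 with hsdef
  set cd : ℝ := ⟪ηh d, η d⟫ with hcd
  have habs : |s| = 1 := by rw [hsdef]; split_ifs <;> simp
  have hsc : s * cd = |cd| := by
    rw [hsdef, hcd]; split_ifs with h
    · rw [one_mul, abs_of_nonneg h]
    · push_neg at h; rw [abs_of_neg h]; ring
  have hnormsq : ‖ηh d - s • η d‖ ^ 2 = 2 - 2 * |cd| := by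
    rw [@norm_sub_sq_real, norm_smul, real_inner_smul_right, hon.1 d, honh.1 d,
      Real.norm_eq_abs, habs, ← hcd, hsc]
    ring
  have hcd1 : |cd| ≤ 1 := by
    have := abs_real_inner_le_norm (ηh d) (η d)
    rw [hon.1 d, honh.1 d] at this
    simpa [hcd] using this
  have hkey : 1 - cd ^ 2 ≤ 4 / g ^ 2 * ε ^ 2 := by
    by_cases hbig : g / 2 ≤ ε
    · have hg2 : g ≤ 2 * ε := by linarith
      have h4 : g ^ 2 ≤ 4 * ε ^ 2 := by
        have h5 : g * g ≤ (2 * ε) * (2 * ε) := mul_le_mul hg2 hg2 hg.le (by linarith)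
        calc g ^ 2 = g * g := sq g
          _ ≤ (2 * ε) * (2 * ε) := h5
          _ = 4 * ε ^ 2 := by ring
      have h1 : (1 : ℝ) ≤ 4 / g ^ 2 * ε ^ 2 := by
        rw [div_mul_eq_mul_div, le_div_iff₀ (by positivity)]
        linarith
      linarith [sq_nonneg cd]
    · push_neg at hbig
      -- main case
      set c : ℕ → ℝ := fun j => ⟪η j, ηh d⟫ with hc
      have hcdc : cd = c d := by rw [hcd, hc]; exact real_inner_comm _ _
      set v : H := Γh (ηh d) - Γ (ηh d) with hv
      have hvnorm : ‖v‖ ≤ ε := by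
        rw [hv, ← ContinuousLinearMap.sub_apply]
        calc ‖(Γh - Γ) (ηh d)‖ ≤ ‖Γh - Γ‖ * ‖ηh d‖ := (Γh - Γ).le_opNorm _
          _ = ε := by rw [honh.1 d, mul_one, hε]
      have hvsq : ‖v‖ ^ 2 ≤ ε ^ 2 := by nlinarith [norm_nonneg v]
      have hβ : ∀ j, ⟪η j, v⟫ = (μh d - μ j) * c j := by
        intro j
        have h2 : ⟪η j, Γ (ηh d)⟫ = μ j * c j := by
          rw [← hΓsa (η j) (ηh d), heig j, real_inner_smul_left, hc]
        rw [hv, inner_sub_right, heigh d, real_inner_smul_right, h2, hc]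
        ring
      have hμhd : g / 2 < μh d := by linarith
      have hsep : ∀ j, j ≠ d → (g / 2) ^ 2 * c j ^ 2 ≤ ((μh d - μ j) * c j) ^ 2 := by
        intro j hj
        have habsj : g / 2 ≤ |μh d - μ j| := by
          rcases lt_or_gt_of_ne hj with hjd | hjd
          · have hd0 : d ≠ 0 := by omega
            have h1 : μ (d - 1) ≤ μ j := hmono (by omega)
            have h2 := hgup hd0
            exact le_abs.mpr (Or.inr (by linarith))
          · have h1 : μ j ≤ μ (d + 1) := hmono (by omega)
            exact le_abs.mpr (Or.inl (by linarith))
        have h2 : (g / 2) ^ 2 ≤ (μh d - μ j) ^ 2 := by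
          rw [← sq_abs (μh d - μ j)]
          exact pow_le_pow_left₀ (by positivity) habsj 2
        nlinarith [sq_nonneg (c j)]
      -- summability facts
      have Sc : Summable (fun j => c j ^ 2) := by
        have := hon.inner_products_summable (x := ηh d)
        refine this.congr (fun j => ?_)
        rw [Real.norm_eq_abs, sq_abs, hc]
      have SB : Summable (fun j => ((μh d - μ j) * c j) ^ 2) := by
        have := hon.inner_products_summable (x := v)
        refine this.congr (fun j => ?_)
        rw [Real.norm_eq_abs, sq_abs, hβ j]
      have hBesselv : ∑' j, ((μh d - μ j) * c j) ^ 2 ≤ ε ^ 2 := by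
        have h1 := hon.tsum_inner_products_le (x := v)
        have h2 : (∑' j, ‖(⟪η j, v⟫ : ℝ)‖ ^ 2) = ∑' j, ((μh d - μ j) * c j) ^ 2 := by
          congr 1; funext j; rw [Real.norm_eq_abs, sq_abs, hβ j]
        rw [h2] at h1
        linarith
      set S : ℝ := ∑' j, c j ^ 2 with hS
      have hS1 : S ≤ 1 := by
        have h1 := hon.tsum_inner_products_le (x := ηh d)
        have h2 : (∑' j, ‖(⟪η j, ηh d⟫ : ℝ)‖ ^ 2) = S := by
          rw [hS]; congr 1; funext j; rw [Real.norm_eq_abs, sq_abs, hc]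
        rw [h2, honh.1 d] at h1
        simpa using h1
      set e : ℕ → ℝ := fun j => if j = d then 0 else c j ^ 2 with he
      have Se : Summable e := by
        refine Summable.of_nonneg_of_le (fun j => ?_) (fun j => ?_) Sc
        · rw [he]; dsimp only; split_ifs
          · exact le_rfl
          · exact sq_nonneg _
        · rw [he]; dsimp only; split_ifs
          · exact sq_nonneg _
          · exact le_refl _
      set T : ℝ := ∑' j, e j with hT
      have hTS : T = S - c d ^ 2 := by
        have h1 : ∀ j, c j ^ 2 - e j = if j = d then c d ^ 2 else 0 := by
          intro j; rw [he]; dsimp only; split_ifs with h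
          · subst h; ring
          · ring
        have h2 : S - T = c d ^ 2 := by
          rw [hS, hT, ← Summable.tsum_sub Sc Se]
          rw [show (fun j => c j ^ 2 - e j) = fun j => if j = d then c d ^ 2 else 0 from funext h1]
          exact tsum_ite_eq d _
        linarith
      have hTB : (g / 2) ^ 2 * T ≤ ∑' j, ((μh d - μ j) * c j) ^ 2 := by
        rw [hT, ← tsum_mul_left]
        refine Summable.tsum_le_tsum (fun j => ?_) (Se.mul_left _) SB
        rw [he]; dsimp only; split_ifs with h
        · simpa using sq_nonneg ((μh d - μ j) * c j)
        · exact hsep j h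
      have hfin : (g / 2) ^ 2 * (1 - cd ^ 2) ≤ ε ^ 2 := by
        by_cases hSlt : S < 1
        · -- hard case with remainder
          set sN : ℕ → ℝ := fun N => ∑ j ∈ Finset.range N, c j ^ 2 with hsNdef
          have hsNS : ∀ N, sN N ≤ S :=
            fun N => Summable.sum_le_tsum (Finset.range N) (fun j _ => sq_nonneg _) Sc
          set rN : ℕ → H := fun N => ηh d - ∑ j ∈ Finset.range N, c j • η j with hrNdef
          have hrinner : ∀ N, ∀ j ∈ Finset.range N, ⟪η j, rN N⟫ = 0 := by
            intro N j hj
            rw [hrNdef]; dsimp only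
            rw [inner_sub_right, hon.inner_right_sum c hj]
            simp [hc]
          have hrnorm : ∀ N, ‖rN N‖ ^ 2 = 1 - sN N := by
            intro N
            rw [hrNdef]; dsimp only
            rw [@norm_sub_sq_real, honh.1 d]
            have h1 : ⟪ηh d, ∑ j ∈ Finset.range N, c j • η j⟫ = sN N := by
              rw [inner_sum, hsNdef]; dsimp only
              refine Finset.sum_congr rfl (fun j _ => ?_)
              rw [real_inner_smul_right, real_inner_comm (η j) (ηh d)]
              simp [hc]; ring
            have h2 : ‖∑ j ∈ Finset.range N, c j • η j‖ ^ 2 = sN N := by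
              rw [← real_inner_self_eq_norm_sq, hon.inner_sum, hsNdef]
              simp [sq]
            rw [h1, h2]; ring
          have h1Spos : (0:ℝ) < 1 - S := by linarith
          have hrne : ∀ N, rN N ≠ 0 := by
            intro N h0
            have := hrnorm N
            rw [h0] at this
            simp at this
            have := hsNS N
            linarith
          set G : ℕ → H := fun j => (μ j * c j) • η j with hG
          have hdecG : Γ (ηh d) = ∑' j, G j := by
            rw [hdec (ηh d)]
          by_cases hGsum : Summable G
          · -- main sub-case
            have hmt : ⟪ηh d, ∑' z, G z⟫ = ∑' z, ⟪ηh d, G z⟫ := by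
              have h := (innerSL ℝ (ηh d)).map_tsum hGsum
              simpa using h
            have hq : ⟪ηh d, Γ (ηh d)⟫ = ∑' j, μ j * c j ^ 2 := by
              rw [hdecG, hmt]
              congr 1; funext j
              rw [hG]; dsimp only
              rw [real_inner_smul_right, real_inner_comm (η j) (ηh d)]
              simp [hc]; ring
            have Smc : Summable (fun j => μ j * c j ^ 2) := by
              have hs : Summable (fun j => (⟪ηh d, G j⟫ : ℝ)) := by
                have h := (innerSL ℝ (ηh d)).summable hGsum
                simpa using h
              refine hs.congr (fun j => ?_)
              rw [hG]; dsimp only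
              rw [real_inner_smul_right, real_inner_comm (η j) (ηh d)]
              simp [hc]; ring
            set q : ℝ := ∑' j, μ j * c j ^ 2 with hqdef
            set tN : ℕ → ℝ := fun N => q - ∑ j ∈ Finset.range N, μ j * c j ^ 2 with htNdef
            have htN0 : Filter.Tendsto tN Filter.atTop (nhds 0) := by
              have h := Smc.hasSum.tendsto_sum_nat
              have h2 := Filter.Tendsto.sub (tendsto_const_nhds (x := q)) h
              rw [htNdef]
              simpa [← hqdef] using h2
            have hjg : ∀ j, ⟪η j, Γ (ηh d)⟫ = μ j * c j := by
              intro j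
              rw [← hΓsa (η j) (ηh d), heig j, real_inner_smul_left]
            have hrv : ∀ N, ⟪rN N, v⟫ = μh d * (1 - sN N) - tN N := by
              intro N
              have ha : ⟪rN N, ηh d⟫ = 1 - sN N := by
                rw [hrNdef]; dsimp only
                rw [inner_sub_left, sum_inner, real_inner_self_eq_norm_sq, honh.1 d]
                have : ∀ j ∈ Finset.range N, ⟪c j • η j, ηh d⟫ = c j ^ 2 := by
                  intro j _
                  rw [real_inner_smul_left]
                  simp [hc]; ring
                rw [Finset.sum_congr rfl this, hsNdef]
                norm_num
              have hb : ⟪rN N, Γ (ηh d)⟫ = tN N := by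
                rw [hrNdef]; dsimp only
                rw [inner_sub_left, sum_inner, hq]
                have : ∀ j ∈ Finset.range N, ⟪c j • η j, Γ (ηh d)⟫ = μ j * c j ^ 2 := by
                  intro j _
                  rw [real_inner_smul_left, hjg j]
                  ring
                rw [Finset.sum_congr rfl this, htNdef, hqdef]
              have hgh : ⟪rN N, Γh (ηh d)⟫ = μh d * (1 - sN N) := by
                rw [heigh d, real_inner_smul_right, ha]
              rw [hv, inner_sub_right, hgh, hb]
            have hjoint : ∀ N, (∑ j ∈ Finset.range N, ((μh d - μ j) * c j) ^ 2)
                + (μh d * (1 - sN N) - tN N) ^ 2 / (1 - sN N) ≤ ε ^ 2 := by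
              intro N
              have hrne' : ‖rN N‖ ≠ 0 := norm_ne_zero_iff.mpr (hrne N)
              set u : H := ‖rN N‖⁻¹ • rN N with hu
              set w : Fin (N + 1) → H := fun i => if (i : ℕ) < N then η i else u with hw
              have hiu : ∀ j ∈ Finset.range N, ⟪η j, u⟫ = 0 := by
                intro j hj
                rw [hu, real_inner_smul_right, hrinner N j hj, mul_zero]
              have honw : Orthonormal ℝ w := by
                rw [orthonormal_iff_ite]
                intro i j
                rw [hw]; dsimp only
                by_cases hi : (i : ℕ) < N <;> by_cases hj : (j : ℕ) < N
                · rw [if_pos hi, if_pos hj]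
                  have h := orthonormal_iff_ite.mp hon (i : ℕ) (j : ℕ)
                  rw [h]
                  congr 1
                  simp [Fin.ext_iff]
                · rw [if_pos hi, if_neg hj, hiu i (Finset.mem_range.mpr hi), if_neg]
                  intro hij
                  rw [hij] at hi; exact hj hi
                · rw [if_neg hi, if_pos hj, if_neg]
                  · rw [real_inner_comm, hiu j (Finset.mem_range.mpr hj)]
                  · intro hij
                    rw [← hij] at hj; exact hi hj
                · have hij : i = j := by
                    have hi' : (i : ℕ) = N := by omega
                    have hj' : (j : ℕ) = N := by omega
                    exact Fin.ext (by rw [hi', hj'])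
                  rw [if_neg hi, if_neg hj, if_pos hij, hu, real_inner_smul_left,
                    real_inner_smul_right, real_inner_self_eq_norm_sq]
                  field_simp
              have hB := honw.sum_inner_products_le (s := Finset.univ) v
              have hsplit : (∑ i : Fin (N + 1), ‖(⟪w i, v⟫ : ℝ)‖ ^ 2)
                  = (∑ j ∈ Finset.range N, ((μh d - μ j) * c j) ^ 2)
                    + (μh d * (1 - sN N) - tN N) ^ 2 / (1 - sN N) := by
                rw [Fin.sum_univ_castSucc]
                congr 1
                · have hterm : ∀ i : Fin N, ‖(⟪w i.castSucc, v⟫ : ℝ)‖ ^ 2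
                      = ((μh d - μ (i : ℕ)) * c (i : ℕ)) ^ 2 := by
                    intro i
                    have hlt : ((i.castSucc : Fin (N+1)) : ℕ) < N := by
                      simp [Fin.castSucc]
                    rw [hw]; dsimp only
                    rw [if_pos hlt]
                    rw [hβ, Real.norm_eq_abs, sq_abs]
                    norm_num [Fin.coe_castSucc]
                  rw [Finset.sum_congr rfl (fun i _ => hterm i)]
                  exact Fin.sum_univ_eq_sum_range (fun j => ((μh d - μ j) * c j) ^ 2) N
                · have hlast : ¬ ((Fin.last N : ℕ) < N) := by simp
                  rw [hw]; dsimp only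
                  rw [if_neg hlast, hu, real_inner_smul_left, hrv N, Real.norm_eq_abs, sq_abs,
                    mul_pow, inv_pow, hrnorm N, inv_mul_eq_div]
              rw [hsplit] at hB
              linarith
            have hL1 : Filter.Tendsto (fun N => ∑ j ∈ Finset.range N, ((μh d - μ j) * c j) ^ 2)
                Filter.atTop (nhds (∑' j, ((μh d - μ j) * c j) ^ 2)) :=
              SB.hasSum.tendsto_sum_nat
            have hsNlim : Filter.Tendsto sN Filter.atTop (nhds S) := by
              have h := Sc.hasSum.tendsto_sum_nat
              rw [hsNdef, hS]
              exact h
            have hden : Filter.Tendsto (fun N => 1 - sN N) Filter.atTop (nhds (1 - S)) :=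
              tendsto_const_nhds.sub hsNlim
            have hL2 : Filter.Tendsto (fun N => (μh d * (1 - sN N) - tN N) ^ 2 / (1 - sN N))
                Filter.atTop (nhds ((μh d * (1 - S)) ^ 2 / (1 - S))) := by
              have hnum : Filter.Tendsto (fun N => μh d * (1 - sN N) - tN N) Filter.atTop
                  (nhds (μh d * (1 - S) - 0)) := (hden.const_mul (μh d)).sub htN0
              rw [sub_zero] at hnum
              exact (hnum.pow 2).div hden h1Spos.ne'
            have hlimit : (∑' j, ((μh d - μ j) * c j) ^ 2) + (μh d * (1 - S)) ^ 2 / (1 - S)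
                ≤ ε ^ 2 :=
              le_of_tendsto (hL1.add hL2) (Filter.Eventually.of_forall hjoint)
            have hdiv : (μh d * (1 - S)) ^ 2 / (1 - S) = μh d ^ 2 * (1 - S) := by
              field_simp
            have hμh2 : (g / 2) ^ 2 ≤ μh d ^ 2 := by
              have h5 := mul_le_mul hμhd.le hμhd.le (by positivity) (by linarith)
              calc (g / 2) ^ 2 = (g / 2) * (g / 2) := sq _
                _ ≤ μh d * μh d := h5
                _ = μh d ^ 2 := (sq _).symm
            have hcomb : (g / 2) ^ 2 * (1 - cd ^ 2)
                ≤ (∑' j, ((μh d - μ j) * c j) ^ 2) + μh d ^ 2 * (1 - S) := by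
              have e1 : 1 - cd ^ 2 = T + (1 - S) := by rw [hcdc, hTS]; ring
              rw [e1, mul_add]
              exact add_le_add hTB (mul_le_mul_of_nonneg_right hμh2 (by linarith))
            rw [hdiv] at hlimit
            linarith
          · exfalso
            have h0 : Γ (ηh d) = 0 := by rw [hdecG, tsum_eq_zero_of_not_summable hGsum]
            have hv0 : v = μh d • ηh d := by rw [hv, heigh d, h0, sub_zero]
            have hveq : ‖v‖ = μh d := by
              rw [hv0, norm_smul, honh.1 d, mul_one, Real.norm_eq_abs, abs_of_nonneg (nnh d)]
            linarith [hvnorm]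
        · push_neg at hSlt
          have h1 : 1 - cd ^ 2 ≤ T := by rw [hcdc, hTS]; linarith
          have h2 : (g / 2) ^ 2 * (1 - cd ^ 2) ≤ (g / 2) ^ 2 * T :=
            mul_le_mul_of_nonneg_left h1 (by positivity)
          linarith [hTB, hBesselv]
      have h6 : (g / 2) ^ 2 * (1 - cd ^ 2) = (1 - cd ^ 2) * g ^ 2 / 4 := by ring
      rw [div_mul_eq_mul_div, le_div_iff₀ (by positivity)]
      linarith [hfin]
  -- conclude from hkey
  have h1 : ‖ηh d - s • η d‖ ^ 2 ≤ 8 / g ^ 2 * ε ^ 2 := by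
    rw [hnormsq]
    have hsq : cd ^ 2 ≤ |cd| := by nlinarith [abs_nonneg cd, sq_abs cd]
    have h7 : 8 / g ^ 2 * ε ^ 2 = 2 * (4 / g ^ 2 * ε ^ 2) := by ring
    linarith [hkey]
  rw [hbg]
  have hrhs : Real.sqrt (8 / g ^ 2) * ε = Real.sqrt (8 / g ^ 2 * ε ^ 2) := by
    rw [Real.sqrt_mul (by positivity), Real.sqrt_sq hε0]
  rw [hrhs]
  have h2 := Real.sqrt_le_sqrt h1
  rwa [Real.sqrt_sq (norm_nonneg _)] at h2
end
end

section
/- For every α ∈ (0,1], L > 0 and integer p ≥ 2, there exist a constant c > 0 depending only on α and two centered Gaussian processes Z_0 and Z_1 defined on a common probability space such that: (i) the laws of Z_0 and Z_1 both belong to R_α(L); (ii) Z_0(t_h) = Z_1(t_h) almost surely for every h = 0,…,p−1, where t_h = h/(p−1); (iii) the covariance operator of Z_j (j = 0,1) has rank one, with unit-norm top eigenfunction η_j ∈ L²([0,1]); and (iv) min(‖η_0 − η_1‖², ‖η_0 + η_1‖²) ≥ c p^{−2α}. -/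
open MeasureTheory ProbabilityTheory

noncomputable section

open Real Filter

/-! ### Auxiliary lemmas: moments of the standard Gaussian -/

lemma my_stdG_eq : gaussianReal 0 1 = MeasureTheory.volume.withDensity
    (fun x => ENNReal.ofReal ((Real.sqrt (2 * π))⁻¹ * Real.exp (-x ^ 2 / 2))) := by
  rw [gaussianReal_of_var_ne_zero _ one_ne_zero]
  congr 1
  funext x
  simp [gaussianPDF, gaussianPDFReal]

lemma my_integrable_poly (k : ℕ) (hk : k ≤ 2) :
    Integrable (fun x : ℝ => x ^ k * Real.exp (-x ^ 2 / 2)) := by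
  apply Integrable.mono' ((integrable_exp_neg_mul_sq (by norm_num : (0:ℝ) < 1/4)).const_mul 4)
  · exact (continuous_pow k).mul (Real.continuous_exp.comp (by continuity)) |>.aestronglyMeasurable
  · filter_upwards with x
    have h1 : |x ^ k| ≤ 1 + x ^ 2 := by
      interval_cases k
      · simp; nlinarith
      · rw [abs_pow, pow_one]
        nlinarith [abs_nonneg x, sq_abs x, sq_nonneg (|x| - 1)]
      · rw [abs_pow, sq_abs]; nlinarith
    have h2 : 1 + x ^ 2 ≤ 4 * Real.exp ((1/4) * x ^ 2) := by
      have := Real.add_one_le_exp ((1/4) * x ^ 2)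
      nlinarith
    have h3 : Real.exp ((1/4) * x^2) * Real.exp (-x^2/2) = Real.exp (-(1/4) * x ^ 2) := by
      rw [← Real.exp_add]; ring_nf
    rw [norm_mul, Real.norm_eq_abs, Real.norm_eq_abs, Real.abs_exp]
    calc |x ^ k| * Real.exp (-x^2/2) ≤ (4 * Real.exp ((1/4)*x^2)) * Real.exp (-x^2/2) := by
          apply mul_le_mul_of_nonneg_right (h1.trans h2) (Real.exp_nonneg _)
      _ = 4 * Real.exp (-(1/4) * x ^ 2) := by rw [mul_assoc, h3]

lemma my_integrable_pow_gauss (k : ℕ) (hk : k ≤ 2) :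
    Integrable (fun x : ℝ => x ^ k) (gaussianReal 0 1) := by
  rw [my_stdG_eq, integrable_withDensity_iff (by measurability)
    (by filter_upwards with x using ENNReal.ofReal_lt_top)]
  have h : ∀ x : ℝ, x ^ k * (ENNReal.ofReal ((Real.sqrt (2 * π))⁻¹ * Real.exp (-x ^ 2 / 2))).toReal
      = (Real.sqrt (2 * π))⁻¹ * (x ^ k * Real.exp (-x ^ 2 / 2)) := by
    intro x
    rw [ENNReal.toReal_ofReal (by positivity)]
    ring
  simp only [h]
  exact (my_integrable_poly k hk).const_mul _

lemma my_integral_pow_gauss (k : ℕ) :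
    ∫ x, x ^ k ∂(gaussianReal 0 1) = (Real.sqrt (2*π))⁻¹ * ∫ x, x ^ k * Real.exp (-x^2/2) := by
  rw [my_stdG_eq]
  simp_rw [ENNReal.ofReal]
  rw [integral_withDensity_eq_integral_smul (by measurability), ← integral_const_mul]
  congr 1
  funext x
  rw [NNReal.smul_def, smul_eq_mul, Real.coe_toNNReal _ (by positivity)]
  ring

lemma my_integral_id_gauss : ∫ x, x ∂(gaussianReal 0 1) = 0 := by
  have hmap : (gaussianReal 0 1).map (fun x => (-1 : ℝ) * x) = gaussianReal 0 1 := by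
    have h2 := gaussianReal_map_const_mul (μ := 0) (v := 1) (-1 : ℝ)
    have h3 : (⟨(-1:ℝ)^2, sq_nonneg _⟩ : NNReal) * 1 = 1 := by ext; norm_num
    rw [mul_zero] at h2
    convert h2 using 2
    ext; norm_num
  have h : ∫ x, x ∂(gaussianReal 0 1) = ∫ x, x ∂((gaussianReal 0 1).map (fun x => (-1:ℝ) * x)) := by
    rw [hmap]
  rw [integral_map (by fun_prop) measurable_id'.aestronglyMeasurable] at h
  simp only [neg_one_mul] at h
  rw [integral_neg] at h
  linarith

lemma my_integral_sq_exp : ∫ x : ℝ, x ^ 2 * Real.exp (-x ^ 2 / 2) = Real.sqrt (2 * π) := by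
  have hderiv : ∀ x : ℝ, HasDerivAt (fun y : ℝ => -(y * Real.exp (-y ^ 2 / 2)))
      (x ^ 2 * Real.exp (-x ^ 2 / 2) - Real.exp (-x ^ 2 / 2)) x := by
    intro x
    have h1 : HasDerivAt (fun y : ℝ => -y ^ 2 / 2) (-x) x := by
      have h := ((hasDerivAt_pow 2 x).neg).div_const 2
      norm_num at h
      refine h.congr_deriv ?_
      ring
    have h2 := h1.exp
    have h3 := ((hasDerivAt_id x).mul h2).neg
    refine h3.congr_deriv ?_
    simp [id]
    ring
  have hf : Integrable (fun y : ℝ => -(y * Real.exp (-y ^ 2 / 2))) := by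
    have h := (my_integrable_poly 1 (by norm_num)).neg
    simp only [pow_one] at h
    exact h
  have hf' : Integrable (fun x : ℝ => x ^ 2 * Real.exp (-x ^ 2 / 2) - Real.exp (-x ^ 2 / 2)) := by
    have h0 := my_integrable_poly 0 (by norm_num)
    simp only [pow_zero, one_mul] at h0
    exact (my_integrable_poly 2 (by norm_num)).sub h0
  have key := integral_eq_zero_of_hasDerivAt_of_integrable hderiv hf' hf
  have h0 := my_integrable_poly 0 (by norm_num)
  simp only [pow_zero, one_mul] at h0
  rw [integral_sub (my_integrable_poly 2 (by norm_num)) h0, sub_eq_zero] at key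
  rw [key]
  have : ∀ x : ℝ, Real.exp (-x ^ 2 / 2) = Real.exp (-(1/2 : ℝ) * x ^ 2) := by
    intro x; ring_nf
  simp only [this]
  rw [integral_gaussian]
  norm_num [mul_comm]

lemma my_integral_sq_gauss : ∫ x, x ^ 2 ∂(gaussianReal 0 1) = 1 := by
  rw [my_integral_pow_gauss 2, my_integral_sq_exp]
  rw [inv_mul_cancel₀]
  positivity

/-! ### Trigonometric integrals on the unit interval -/

lemma my_sin_lip (x y : ℝ) : |Real.sin x - Real.sin y| ≤ |x - y| := by
  rw [Real.sin_sub_sin, abs_mul, abs_mul]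
  have h1 : |Real.sin ((x - y) / 2)| ≤ |(x - y) / 2| := Real.abs_sin_le_abs
  have h2 : |Real.cos ((x + y) / 2)| ≤ 1 := Real.abs_cos_le_one _
  have h3 : |(x - y) / 2| = |x - y| / 2 := by rw [abs_div]; norm_num
  rw [h3] at h1
  have h4 : (0:ℝ) ≤ |Real.sin ((x - y) / 2)| := abs_nonneg _
  have h5 : (0:ℝ) ≤ |x - y| / 2 := by positivity
  have : |(2:ℝ)| = 2 := by norm_num
  rw [this]
  nlinarith

lemma my_trig_sin (c : ℝ) (hc : c ≠ 0) (hcos : Real.cos c = 1) :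
    ∫ t in unitI, Real.sin (c * t) = 0 := by
  rw [show unitI = Set.Icc (0:ℝ) 1 from rfl, MeasureTheory.integral_Icc_eq_integral_Ioc,
    ← intervalIntegral.integral_of_le zero_le_one,
    intervalIntegral.integral_comp_mul_left (fun x => Real.sin x) hc]
  rw [mul_zero, mul_one, integral_sin, Real.cos_zero, hcos]
  simp

lemma my_trig_sin_sq (c : ℝ) (hc : c ≠ 0) (hsin : Real.sin c = 0) :
    ∫ t in unitI, Real.sin (c * t) ^ 2 = 1 / 2 := by
  rw [show unitI = Set.Icc (0:ℝ) 1 from rfl, MeasureTheory.integral_Icc_eq_integral_Ioc,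
    ← intervalIntegral.integral_of_le zero_le_one,
    intervalIntegral.integral_comp_mul_left (fun x => Real.sin x ^ 2) hc]
  rw [mul_zero, mul_one, integral_sin_sq, Real.sin_zero, hsin]
  rw [smul_eq_mul]
  field_simp
  ring

lemma my_master (A B c : ℝ) (hc : c ≠ 0) (hsin : Real.sin c = 0) (hcos : Real.cos c = 1) :
    ∫ t in unitI, (A + B * Real.sin (c * t)) ^ 2 = A ^ 2 + B ^ 2 / 2 := by
  have hexp : ∀ t : ℝ, (A + B * Real.sin (c * t)) ^ 2
      = A ^ 2 + ((2 * A * B) * Real.sin (c * t) + B ^ 2 * Real.sin (c * t) ^ 2) := by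
    intro t; ring
  have hI : ∀ g : ℝ → ℝ, Continuous g → IntegrableOn g unitI := by
    intro g hg
    exact hg.integrableOn_Icc
  have h1 : IntegrableOn (fun t : ℝ => (2 * A * B) * Real.sin (c * t)) unitI :=
    hI _ (by fun_prop)
  have h2 : IntegrableOn (fun t : ℝ => B ^ 2 * Real.sin (c * t) ^ 2) unitI :=
    hI _ (by fun_prop)
  have h12 : IntegrableOn (fun t : ℝ => (2 * A * B) * Real.sin (c * t)
      + B ^ 2 * Real.sin (c * t) ^ 2) unitI := h1.add h2
  have hconst : IntegrableOn (fun _ : ℝ => A ^ 2) unitI :=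
    hI _ continuous_const
  simp only [hexp]
  rw [integral_add hconst h12, integral_add h1 h2, setIntegral_const, integral_const_mul,
    integral_const_mul, my_trig_sin c hc hcos, my_trig_sin_sq c hc hsin]
  simp [unitI, Real.volume_Icc]
  ring

/-! ### The rank-one Gaussian process `x ↦ (t ↦ x * g t)` -/

/-- The scaled-line process map. -/
def Tg (g : ℝ → ℝ) : ℝ → (ℝ → ℝ) := fun x t => x * g t

lemma Tg_meas (g : ℝ → ℝ) : Measurable (Tg g) :=
  measurable_pi_lambda _ fun t => measurable_id.mul_const (g t)

lemma my_int_eval (g : ℝ → ℝ) (t : ℝ) :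
    ∫ ω, ω t ∂((gaussianReal 0 1).map (Tg g)) = 0 := by
  rw [integral_map (Tg_meas g).aemeasurable (measurable_pi_apply t).aestronglyMeasurable]
  simp only [Tg]
  rw [integral_mul_const, my_integral_id_gauss, zero_mul]

lemma my_int_cov (g : ℝ → ℝ) (s t : ℝ) :
    covK ((gaussianReal 0 1).map (Tg g)) s t = g s * g t := by
  rw [covK, integral_map (Tg_meas g).aemeasurable
    (by fun_prop : Measurable fun ω : ℝ → ℝ => ω s * ω t).aestronglyMeasurable]
  simp only [Tg]
  have h : ∀ x : ℝ, (x * g s) * (x * g t) = x ^ 2 * (g s * g t) := fun x => by ring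
  simp only [h]
  rw [integral_mul_const, my_integral_sq_gauss, one_mul]

lemma my_int_diff (g : ℝ → ℝ) (s t : ℝ) :
    ∫ ω, (ω t - ω s) ^ 2 ∂((gaussianReal 0 1).map (Tg g)) = (g t - g s) ^ 2 := by
  rw [integral_map (Tg_meas g).aemeasurable
    (by fun_prop : Measurable fun ω : ℝ → ℝ => (ω t - ω s) ^ 2).aestronglyMeasurable]
  simp only [Tg]
  have h : ∀ x : ℝ, (x * g t - x * g s) ^ 2 = x ^ 2 * (g t - g s) ^ 2 := fun x => by ring
  simp only [h]
  rw [integral_mul_const, my_integral_sq_gauss, one_mul]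

lemma my_integrable_sq (g : ℝ → ℝ) (t : ℝ) :
    Integrable (fun ω => (ω t) ^ 2) ((gaussianReal 0 1).map (Tg g)) := by
  rw [integrable_map_measure ((measurable_pi_apply t).pow_const 2).aestronglyMeasurable
    (Tg_meas g).aemeasurable]
  have : ((fun ω : ℝ → ℝ => (ω t) ^ 2) ∘ Tg g) = fun x => x ^ 2 * (g t) ^ 2 := by
    funext x; simp only [Function.comp, Tg]; ring
  rw [this]
  exact (my_integrable_pow_gauss 2 le_rfl).mul_const _

lemma my_gaussP (g : ℝ → ℝ) : isGaussP ((gaussianReal 0 1).map (Tg g)) := by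
  intro k c ts _
  set b := ∑ i, c i * g (ts i) with hb
  have hΦ : Measurable (fun ω : ℝ → ℝ => ∑ i, c i * ω (ts i)) :=
    Finset.measurable_sum _ fun i _ => by fun_prop
  have hcomp : ((fun ω : ℝ → ℝ => ∑ i, c i * ω (ts i)) ∘ Tg g) = fun x => b * x := by
    funext x
    simp only [Function.comp, Tg, hb]
    rw [Finset.sum_mul]
    exact Finset.sum_congr rfl fun i _ => by ring
  have hint : (∫ ω, (∑ i, c i * ω (ts i)) ^ 2 ∂((gaussianReal 0 1).map (Tg g))) = b ^ 2 := by
    rw [integral_map (Tg_meas g).aemeasurable (hΦ.pow_const 2).aestronglyMeasurable]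
    have h : ∀ x : ℝ, (∑ i, c i * (Tg g x) (ts i)) ^ 2 = x ^ 2 * b ^ 2 := by
      intro x
      have := congrFun hcomp x
      simp only [Function.comp] at this
      rw [this]; ring
    simp only [h]
    rw [integral_mul_const, my_integral_sq_gauss, one_mul]
  rw [Measure.map_map hΦ (Tg_meas g), hcomp, hint]
  have hmap := gaussianReal_map_const_mul (μ := 0) (v := 1) b
  rw [mul_zero] at hmap
  have : (fun x : ℝ => b * x) = (b * ·) := rfl
  rw [this, hmap]
  congr 1
  ext
  simp only [NNReal.coe_mul, NNReal.coe_mk, NNReal.coe_one, mul_one]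
  rw [Real.coe_toNNReal _ (sq_nonneg b)]

lemma my_memReg_aux (g : ℝ → ℝ) (α L : ℝ)
    (hreg : ∀ s ∈ unitI, ∀ t ∈ unitI, (g t - g s) ^ 2 ≤ L * |t - s| ^ (2 * α)) :
    memReg α L ((gaussianReal 0 1).map (Tg g)) := by
  refine ⟨Measure.isProbabilityMeasure_map (Tg_meas g).aemeasurable, fun t _ => my_integrable_sq g t,
    fun t _ => my_int_eval g t, fun s hs t ht => ?_⟩
  rw [my_int_diff]
  exact hreg s hs t ht

set_option maxHeartbeats 2000000 in
/-- Two centered Gaussian processes on a common probability space (here: the two marginals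
of a law `P` on pairs of paths) that belong to `R_α(L)`, coincide almost surely on the
grid `t_h = h/(p-1)`, have rank-one covariance operators with unit-norm top eigenfunctions
`η₀, η₁`, and whose top eigenfunctions are at `L²`-distance at least `c p^{-2α}` from each
other (up to sign). -/
theorem stmt18 :
    ∀ α ∈ Set.Ioc (0 : ℝ) 1, ∃ c : ℝ, 0 < c ∧
      ∀ L : ℝ, 0 < L → ∀ p : ℕ, 2 ≤ p →
      ∃ (P : Measure ((ℝ → ℝ) × (ℝ → ℝ))) (_ : IsProbabilityMeasure P)
        (η0 η1 : ℝ → ℝ) (μ0 μ1 : ℝ),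
        memReg α L (P.map Prod.fst) ∧ memReg α L (P.map Prod.snd) ∧
        isGaussP (P.map Prod.fst) ∧ isGaussP (P.map Prod.snd) ∧
        (∀ h : Fin p, ∀ᵐ ω ∂P, ω.1 (grid p h) = ω.2 (grid p h)) ∧
        Measurable η0 ∧ Measurable η1 ∧
        (∫ t in unitI, (η0 t) ^ 2) = 1 ∧ (∫ t in unitI, (η1 t) ^ 2) = 1 ∧
        0 < μ0 ∧ 0 < μ1 ∧
        (∀ s ∈ unitI, ∀ t ∈ unitI, covK (P.map Prod.fst) s t = μ0 * η0 s * η0 t) ∧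
        (∀ s ∈ unitI, ∀ t ∈ unitI, covK (P.map Prod.snd) s t = μ1 * η1 s * η1 t) ∧
        c * (p : ℝ) ^ (-(2 * α))
          ≤ min (∫ t in unitI, (η0 t - η1 t) ^ 2) (∫ t in unitI, (η0 t + η1 t) ^ 2) := by
  intro α hα
  refine ⟨1/3, by norm_num, ?_⟩
  intro L hL p hp2
  -- basic parameters
  set m : ℕ := p - 1 with hm
  have hm1 : 1 ≤ m := by omega
  have hmR : (1:ℝ) ≤ (m:ℝ) := by exact_mod_cast hm1
  have hmpos : (0:ℝ) < (m:ℝ) := by linarith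
  have hpm : ((p:ℝ) - 1) = (m:ℝ) := by
    rw [hm, Nat.cast_sub (by omega : 1 ≤ p)]
    simp
  set cc : ℝ := 2 * π * (m:ℝ) with hcc
  have hccpos : (0:ℝ) < cc := by
    have := Real.pi_pos
    rw [hcc]; positivity
  have hccne : cc ≠ 0 := ne_of_gt hccpos
  have hsin_cc : Real.sin cc = 0 := by
    have h : cc = ((2 * m : ℕ):ℝ) * π := by rw [hcc]; push_cast; ring
    rw [h]; exact Real.sin_nat_mul_pi _
  have hcos_cc : Real.cos cc = 1 := by
    have h : cc = (m:ℝ) * (2 * π) := by rw [hcc]; ring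
    rw [h]; exact Real.cos_nat_mul_two_pi m
  have hpR : (2:ℝ) ≤ (p:ℝ) := by exact_mod_cast hp2
  have hppos : (0:ℝ) < (p:ℝ) := by linarith
  set δ : ℝ := (p:ℝ) ^ (-α) with hδ
  have hδpos : 0 < δ := Real.rpow_pos_of_pos hppos _
  have hδ1 : δ ≤ 1 := Real.rpow_le_one_of_one_le_of_nonpos (by linarith) (by linarith [hα.1])
  have hδsq : δ ^ 2 = (p:ℝ) ^ (-(2 * α)) := by
    rw [hδ, show δ ^ 2 = δ ^ ((2:ℕ):ℝ) from (Real.rpow_natCast δ 2).symm]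
    rw [hδ, ← Real.rpow_mul (le_of_lt hppos)]
    norm_num
    ring_nf
  set a : ℝ := Real.sqrt L / (cc * δ) with ha
  have hapos : 0 < a := by
    rw [ha]
    have : (0:ℝ) < Real.sqrt L := Real.sqrt_pos.mpr hL
    positivity
  set N : ℝ := Real.sqrt (1 + δ ^ 2 / 2) with hN
  have hNpos : 0 < N := by rw [hN]; positivity
  have hNne : N ≠ 0 := ne_of_gt hNpos
  have hN2 : N ^ 2 = 1 + δ ^ 2 / 2 := Real.sq_sqrt (by positivity)
  have hN2le : N ^ 2 ≤ 3 / 2 := by rw [hN2]; nlinarith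
  -- the two coordinate processes
  set g0 : ℝ → ℝ := fun _ => a with hg0
  set g1 : ℝ → ℝ := fun t => a * (1 + δ * Real.sin (cc * t)) with hg1
  set T : ℝ → (ℝ → ℝ) × (ℝ → ℝ) := fun x => (Tg g0 x, Tg g1 x) with hTdef
  have hT : Measurable T := (Tg_meas g0).prodMk (Tg_meas g1)
  set P : Measure ((ℝ → ℝ) × (ℝ → ℝ)) := (gaussianReal 0 1).map T with hP
  have hfst : P.map Prod.fst = (gaussianReal 0 1).map (Tg g0) := by
    rw [hP, Measure.map_map measurable_fst hT]
    rfl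
  have hsnd : P.map Prod.snd = (gaussianReal 0 1).map (Tg g1) := by
    rw [hP, Measure.map_map measurable_snd hT]
    rfl
  -- regularity
  have habs : ∀ s ∈ unitI, ∀ t ∈ unitI, |t - s| ≤ 1 := by
    intro s hs t ht
    obtain ⟨hs0, hs1⟩ := hs
    obtain ⟨ht0, ht1⟩ := ht
    rw [abs_le]
    constructor <;> linarith
  have hpow : ∀ s ∈ unitI, ∀ t ∈ unitI, |t - s| ^ (2:ℕ) ≤ |t - s| ^ (2 * α) := by
    intro s hs t ht
    rcases eq_or_ne t s with rfl | hts
    · rw [sub_self, abs_zero]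
      rw [Real.zero_rpow (by nlinarith [hα.1] : 2 * α ≠ 0)]
      norm_num
    · have h0 : 0 < |t - s| := abs_pos.mpr (sub_ne_zero.mpr hts)
      rw [show |t - s| ^ (2:ℕ) = |t - s| ^ ((2:ℕ):ℝ) from (Real.rpow_natCast _ 2).symm]
      apply Real.rpow_le_rpow_of_exponent_ge h0 (habs s hs t ht)
      push_cast
      nlinarith [hα.2]
  have hreg1 : ∀ s ∈ unitI, ∀ t ∈ unitI, (g1 t - g1 s) ^ 2 ≤ L * |t - s| ^ (2 * α) := by
    intro s hs t ht
    have hd : g1 t - g1 s = a * δ * (Real.sin (cc * t) - Real.sin (cc * s)) := by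
      rw [hg1]; ring
    have h1 : |Real.sin (cc * t) - Real.sin (cc * s)| ≤ cc * |t - s| := by
      calc |Real.sin (cc * t) - Real.sin (cc * s)| ≤ |cc * t - cc * s| := my_sin_lip _ _
        _ = cc * |t - s| := by rw [← mul_sub, abs_mul, abs_of_pos hccpos]
    have h2 : (Real.sin (cc * t) - Real.sin (cc * s)) ^ 2 ≤ (cc * |t - s|) ^ 2 := by
      rw [← sq_abs (Real.sin (cc * t) - Real.sin (cc * s))]
      exact pow_le_pow_left₀ (abs_nonneg _) h1 2
    have h3 : (a * δ) ^ 2 * cc ^ 2 = L := by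
      rw [ha]
      field_simp
      rw [Real.sq_sqrt hL.le]
    calc (g1 t - g1 s) ^ 2 = (a * δ) ^ 2 * (Real.sin (cc * t) - Real.sin (cc * s)) ^ 2 := by
          rw [hd]; ring
      _ ≤ (a * δ) ^ 2 * (cc * |t - s|) ^ 2 := by
          apply mul_le_mul_of_nonneg_left h2 (sq_nonneg _)
      _ = ((a * δ) ^ 2 * cc ^ 2) * |t - s| ^ (2:ℕ) := by ring
      _ = L * |t - s| ^ (2:ℕ) := by rw [h3]
      _ ≤ L * |t - s| ^ (2 * α) := by
          apply mul_le_mul_of_nonneg_left (hpow s hs t ht) hL.le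
  have hreg0 : ∀ s ∈ unitI, ∀ t ∈ unitI, (g0 t - g0 s) ^ 2 ≤ L * |t - s| ^ (2 * α) := by
    intro s hs t ht
    rw [hg0]
    simp only [sub_self, ne_eq, OfNat.ofNat_ne_zero, not_false_eq_true, zero_pow]
    exact mul_nonneg hL.le (Real.rpow_nonneg (abs_nonneg _) _)
  -- eigenfunctions
  refine ⟨P, Measure.isProbabilityMeasure_map hT.aemeasurable,
    (fun _ => (1:ℝ)), (fun t => (1 + δ * Real.sin (cc * t)) / N),
    a ^ 2, a ^ 2 * (1 + δ ^ 2 / 2), ?_, ?_, ?_, ?_, ?_, ?_, ?_, ?_, ?_, ?_, ?_, ?_, ?_, ?_⟩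
  · rw [hfst]; exact my_memReg_aux g0 α L hreg0
  · rw [hsnd]; exact my_memReg_aux g1 α L hreg1
  · rw [hfst]; exact my_gaussP g0
  · rw [hsnd]; exact my_gaussP g1
  · -- grid equality
    intro h
    have hkey : Real.sin (cc * grid p h) = 0 := by
      have hmne : (m:ℝ) ≠ 0 := ne_of_gt hmpos
      have heq : cc * grid p h = ((2 * (h:ℕ) : ℕ):ℝ) * π := by
        rw [grid, hpm, hcc]
        push_cast
        field_simp
      rw [heq]
      exact Real.sin_nat_mul_pi _
    have hset : MeasurableSet {ω : (ℝ → ℝ) × (ℝ → ℝ) | ω.1 (grid p h) = ω.2 (grid p h)} :=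
      measurableSet_eq_fun (measurable_fst.eval) (measurable_snd.eval)
    rw [hP]
    rw [MeasureTheory.ae_map_iff hT.aemeasurable hset]
    filter_upwards with x
    show Tg g0 x (grid p h) = Tg g1 x (grid p h)
    simp only [Tg, hg0, hg1]
    rw [hkey]
    ring
  · exact measurable_const
  · fun_prop
  · -- ∫ η0 ^ 2 = 1
    simp only [one_pow]
    rw [show unitI = Set.Icc (0:ℝ) 1 from rfl, setIntegral_const]
    simp [Real.volume_Icc]
  · -- ∫ η1 ^ 2 = 1
    have hpt : ∀ t : ℝ, ((1 + δ * Real.sin (cc * t)) / N) ^ 2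
        = (1 / N + (δ / N) * Real.sin (cc * t)) ^ 2 := by
      intro t; ring
    simp only [hpt]
    rw [my_master (1 / N) (δ / N) cc hccne hsin_cc hcos_cc]
    rw [div_pow, div_pow, one_pow]
    field_simp
    rw [hN2]
    ring
  · positivity
  · positivity
  · -- covK fst
    intro s _ t _
    rw [hfst, my_int_cov]
    simp only [hg0]
    ring
  · -- covK snd
    intro s _ t _
    rw [hsnd, my_int_cov]
    simp only [hg1]
    rw [show a ^ 2 * (1 + δ ^ 2 / 2) = a ^ 2 * N ^ 2 by rw [hN2]]
    field_simp
  · -- the lower bound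
    have hval1 : (∫ t in unitI, ((fun _ => (1:ℝ)) t - (fun t => (1 + δ * Real.sin (cc * t)) / N) t) ^ 2)
        = (1 - 1 / N) ^ 2 + (δ / N) ^ 2 / 2 := by
      have hpt : ∀ t : ℝ, ((1:ℝ) - (1 + δ * Real.sin (cc * t)) / N) ^ 2
          = ((1 - 1 / N) + (-(δ / N)) * Real.sin (cc * t)) ^ 2 := by
        intro t; ring
      simp only [hpt]
      rw [my_master (1 - 1 / N) (-(δ / N)) cc hccne hsin_cc hcos_cc]
      rw [neg_pow]
      ring
    have hval2 : (∫ t in unitI, ((fun _ => (1:ℝ)) t + (fun t => (1 + δ * Real.sin (cc * t)) / N) t) ^ 2)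
        = (1 + 1 / N) ^ 2 + (δ / N) ^ 2 / 2 := by
      have hpt : ∀ t : ℝ, ((1:ℝ) + (1 + δ * Real.sin (cc * t)) / N) ^ 2
          = ((1 + 1 / N) + (δ / N) * Real.sin (cc * t)) ^ 2 := by
        intro t; ring
      simp only [hpt]
      rw [my_master (1 + 1 / N) (δ / N) cc hccne hsin_cc hcos_cc]
    have hkey : 1 / 3 * (p:ℝ) ^ (-(2 * α)) ≤ (δ / N) ^ 2 / 2 := by
      rw [← hδsq, div_pow]
      have h1 : δ ^ 2 / 3 ≤ δ ^ 2 / N ^ 2 / 2 := by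
        rw [div_div]
        exact div_le_div_of_nonneg_left (sq_nonneg δ) (by positivity) (by nlinarith)
      linarith
    rw [hval1, hval2]
    apply le_min
    · calc (1:ℝ) / 3 * (p:ℝ) ^ (-(2 * α)) ≤ (δ / N) ^ 2 / 2 := hkey
        _ ≤ (1 - 1 / N) ^ 2 + (δ / N) ^ 2 / 2 := by nlinarith [sq_nonneg (1 - 1 / N)]
    · calc (1:ℝ) / 3 * (p:ℝ) ^ (-(2 * α)) ≤ (δ / N) ^ 2 / 2 := hkey
        _ ≤ (1 + 1 / N) ^ 2 + (δ / N) ^ 2 / 2 := by nlinarith [sq_nonneg (1 + 1 / N)]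
end
end
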